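/- arXiv:1304.5109 — 7 statements merged into one kernel-verified Lean document; each statement's English description precedes it below -/
import Mathlib

section
/- For every word u over {a,b} and every natural number m with m > log₄(4·|u| + 4/3) − log₄(2/3) + 3 (where |u| is the length of u), the m-fold iterate t^m(u) is a prefix of the infinite periodic word (ab)^ω = ababab⋯. Consequently, for any k there exists n = O(log k) such that for all words u of length k, t^n(u) is a prefix of (ab)^ω. -/
/-- States of the KSPM(3) transducer. -/
inductive TSt | s00 | s10 | s20 | s11 | s12 | s21 | s22
  deriving DecidableEq

/-- Letters: `a = false`, `b = true`. Transition function of the transducer: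
(state, input letter) ↦ (next state, output word). -/
def tStep : TSt → Bool → TSt × List Bool
  | .s00, false => (.s10, [])
  | .s00, true  => (.s11, [])
  | .s10, false => (.s20, [])
  | .s10, true  => (.s21, [])
  | .s20, false => (.s11, [])
  | .s20, true  => (.s12, [])
  | .s11, false => (.s21, [])
  | .s11, true  => (.s22, [])
  | .s12, false => (.s22, [])
  | .s12, true  => (.s21, [true])
  | .s21, false => (.s12, [false])
  | .s21, true  => (.s11, [false, true])
  | .s22, false => (.s11, [true, false])
  | .s22, true  => (.s12, [true, false])

/-- Run the transducer on a word from a given state, concatenating outputs. -/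
def runT : TSt → List Bool → List Bool
  | _, [] => []
  | q, x :: u => (tStep q x).2 ++ runT (tStep q x).1 u

/-- `t(u)` : run from the initial state `00`. -/
def tT (u : List Bool) : List Bool := runT .s00 u

/-- `t'(u)` : run from the state `21`. -/
def tT' (u : List Bool) : List Bool := runT .s21 u

/-- `w` is a prefix of the infinite periodic word `(ab)^ω` (with `a = false`,
`b = true`): the letter at position `i` is `a` iff `i` is even. -/
def PrefixAB (w : List Bool) : Prop :=
  ∀ i (hi : i < w.length), w.get ⟨i, hi⟩ = decide (i % 2 = 1)

/-- The language `L = {ab·u : u word} ∪ {ε, a}`. -/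
def LangL : Set (List Bool) :=
  {w | ∃ u : List Bool, w = false :: true :: u} ∪ {[], [false]}

/-- The height `h(u) = | |u|_a − |u|_b |`. -/
def hgt (u : List Bool) : ℕ :=
  ((u.count false : ℤ) - (u.count true : ℤ)).natAbs

/-- The maximal height `g(u) = max { h(u') : u' prefix of u }`. -/
def gmax (u : List Bool) : ℕ := (u.inits.map hgt).foldr max 0

namespace KS

/-- signed height -/
def H : List Bool → ℤ
  | [] => 0
  | x :: u => (if x then -1 else 1) + H u

lemma H_append (u v : List Bool) : H (u ++ v) = H u + H v := by
  induction u with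
  | nil => simp [H]
  | cons x u ih => simp [H, ih]; ring

def dlo : TSt → ℤ
  | .s00 => 0 | .s10 => 1 | .s20 => 2 | .s11 => -1 | .s12 => -3 | .s21 => 0 | .s22 => -2

def dhi : TSt → ℤ
  | .s00 => 0 | .s10 => 1 | .s20 => 2 | .s11 => 3 | .s12 => 1 | .s21 => 4 | .s22 => 2

lemma d_range (q : TSt) : -4 ≤ dlo q ∧ dhi q ≤ 4 := by cases q <;> simp [dlo, dhi]

lemma stepA (q : TSt) (x : Bool) (d : ℤ) (h1 : dlo q ≤ d) (h2 : d ≤ dhi q) :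
    dlo (tStep q x).1 ≤ d + (if x then -1 else 1) - 4 * H (tStep q x).2 ∧
      d + (if x then -1 else 1) - 4 * H (tStep q x).2 ≤ dhi (tStep q x).1 := by
  cases q <;> cases x <;> simp [tStep, dlo, dhi, H] at * <;> omega

lemma prefix_two {α} {w : List α} {a b : α} (h : w <+: [a, b]) :
    w = [] ∨ w = [a] ∨ w = [a, b] := by
  obtain ⟨t, ht⟩ := h
  match w with
  | [] => exact Or.inl rfl
  | [x] => simp at ht; exact Or.inr (Or.inl (by rw [ht.1]))
  | x :: y :: w' =>
    simp at ht
    obtain ⟨h1, h2, h3, _⟩ := ht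
    exact Or.inr (Or.inr (by rw [h1, h2, h3]))

lemma prefix_one {α} {w : List α} {a : α} (h : w <+: [a]) : w = [] ∨ w = [a] := by
  obtain ⟨t, ht⟩ := h
  match w with
  | [] => exact Or.inl rfl
  | [x] => simp at ht; exact Or.inr (by rw [ht.1])
  | x :: y :: w' => simp at ht

lemma chunk_bound (q : TSt) (x : Bool) {w : List Bool} (hw : w <+: (tStep q x).2) :
    -1 ≤ H w ∧ H w ≤ 1 := by
  cases q <;> cases x <;> simp only [tStep] at hw <;>
  first
  | (rw [List.prefix_nil] at hw; subst hw; simp [H])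
  | (rcases prefix_one hw with rfl | rfl <;> simp [H])
  | (rcases prefix_two hw with rfl | rfl | rfl <;> simp [H])

lemma prefix_append_cases {α} {w o r : List α} (h : w <+: o ++ r) :
    w <+: o ∨ ∃ w', w = o ++ w' ∧ w' <+: r := by
  induction o generalizing w with
  | nil => exact Or.inr ⟨w, rfl, by simpa using h⟩
  | cons y o' ih =>
    match w with
    | [] => exact Or.inl (List.nil_prefix)
    | z :: w' =>
      rw [List.cons_append, List.cons_prefix_cons] at h
      obtain ⟨rfl, h2⟩ := h
      rcases ih h2 with h3 | ⟨w'', rfl, h4⟩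
      · exact Or.inl (List.cons_prefix_cons.mpr ⟨rfl, h3⟩)
      · exact Or.inr ⟨w'', rfl, h4⟩


lemma keyA (G : ℤ) : ∀ (u : List Bool) (q : TSt) (a b : ℤ),
    dlo q ≤ a - 4 * b → a - 4 * b ≤ dhi q →
    (∀ p : List Bool, p <+: u → -G ≤ a + H p ∧ a + H p ≤ G) →
    ∀ w, w <+: runT q u → -(G + 8) ≤ 4 * (b + H w) ∧ 4 * (b + H w) ≤ G + 8 := by
  intro u
  induction u with
  | nil =>
    intro q a b h1 h2 hp w hw
    rw [show runT q [] = [] from rfl, List.prefix_nil] at hw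
    subst hw
    have ha := hp [] List.nil_prefix
    have hd := d_range q
    simp [H] at ha ⊢
    omega
  | cons x u' ih =>
    intro q a b h1 h2 hp w hw
    rw [show runT q (x :: u') = (tStep q x).2 ++ runT (tStep q x).1 u' from rfl] at hw
    have ha := hp [] List.nil_prefix
    have hd := d_range q
    simp [H] at ha
    rcases prefix_append_cases hw with hc | ⟨w', rfl, hw'⟩
    · have hb := chunk_bound q x hc
      omega
    · have hst := stepA q x (a - 4 * b) h1 h2
      have hx : -G ≤ (a + (if x then -1 else 1)) ∧ (a + (if x then -1 else 1)) ≤ G := by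
        have := hp [x] (by simpa using List.cons_prefix_cons.mpr ⟨rfl, List.nil_prefix⟩)
        simpa [H] using this
      have hih := ih (tStep q x).1 (a + (if x then -1 else 1)) (b + H (tStep q x).2)
        (by omega) (by omega)
        (fun p hp' => by
          have := hp (x :: p) (List.cons_prefix_cons.mpr ⟨rfl, hp'⟩)
          simp only [H] at this
          constructor <;> omega)
        w' hw'
      rw [H_append]
      omega


def fG (x : ℕ) : ℕ := (x + 8) / 4

lemma Gs_bound (n : ℕ) : ∀ j : ℕ, 3 * fG^[j] n * 4 ^ j ≤ 3 * n + 8 * 4 ^ j := by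
  intro j
  induction j with
  | zero => simp
  | succ j ih =>
    rw [Function.iterate_succ_apply']
    have h4 : 4 * fG (fG^[j] n) ≤ fG^[j] n + 8 := by
      have := Nat.div_mul_le_self (fG^[j] n + 8) 4
      unfold fG; omega
    calc 3 * fG (fG^[j] n) * 4 ^ (j + 1) = (4 * fG (fG^[j] n)) * (3 * 4 ^ j) := by ring
      _ ≤ (fG^[j] n + 8) * (3 * 4 ^ j) := Nat.mul_le_mul_right _ h4
      _ = 3 * fG^[j] n * 4 ^ j + 24 * 4 ^ j := by ring
      _ ≤ (3 * n + 8 * 4 ^ j) + 24 * 4 ^ j := by omega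
      _ = 3 * n + 8 * 4 ^ (j + 1) := by ring

lemma iterA : ∀ (j : ℕ) (u : List Bool) (n : ℕ),
    (∀ p, p <+: u → -(n : ℤ) ≤ H p ∧ H p ≤ (n : ℤ)) →
    ∀ w, w <+: tT^[j] u → -((fG^[j] n : ℕ) : ℤ) ≤ H w ∧ H w ≤ ((fG^[j] n : ℕ) : ℤ) := by
  intro j
  induction j with
  | zero => intro u n h w hw; simpa using h w (by simpa using hw)
  | succ j ih =>
    intro u n h w hw
    rw [Function.iterate_succ_apply] at hw
    have hstep : ∀ w', w' <+: tT u → -((fG n : ℕ) : ℤ) ≤ H w' ∧ H w' ≤ ((fG n : ℕ) : ℤ) := by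
      intro w' hw'
      have := keyA (n : ℤ) u .s00 0 0 (by simp [dlo]) (by simp [dhi])
        (fun p hp => by simpa using h p hp) w' (by simpa [tT] using hw')
      have hcast : ((fG n : ℕ) : ℤ) = ((n : ℤ) + 8) / 4 := by
        unfold fG; push_cast [Int.natCast_ediv]; norm_num
      omega
    have := ih (tT u) (fG n) hstep w hw
    rwa [← Function.iterate_succ_apply] at this


def finSt : TSt → List Bool → TSt
  | q, [] => q
  | q, x :: u => finSt (tStep q x).1 u

lemma runT_append (q : TSt) (u v : List Bool) :
    runT q (u ++ v) = runT q u ++ runT (finSt q u) v := by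
  induction u generalizing q with
  | nil => simp [runT, finSt]
  | cons x u ih => simp [runT, finSt, ih, List.append_assoc]

def cStep (q : TSt × TSt × TSt) (x : Bool) : (TSt × TSt × TSt) × List Bool :=
  let s := tStep q.1 x
  let o2 := runT q.2.1 s.2
  ((s.1, finSt q.2.1 s.2, finSt q.2.2 o2), runT q.2.2 o2)

def cRun : TSt × TSt × TSt → List Bool → List Bool
  | _, [] => []
  | q, x :: u => (cStep q x).2 ++ cRun (cStep q x).1 u

lemma cRun_eq : ∀ (u : List Bool) (q1 q2 q3 : TSt),
    cRun (q1, q2, q3) u = runT q3 (runT q2 (runT q1 u)) := by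
  intro u
  induction u with
  | nil => intro q1 q2 q3; rfl
  | cons x u ih =>
    intro q1 q2 q3
    show (cStep (q1, q2, q3) x).2 ++ cRun (cStep (q1, q2, q3) x).1 u = _
    rw [show runT q1 (x :: u) = (tStep q1 x).2 ++ runT (tStep q1 x).1 u from rfl,
      runT_append, runT_append, ih]
    rfl

def chainCheck : Bool → List Bool → Bool
  | _, [] => true
  | p, y :: o => (y == p) && chainCheck (!p) o

def Alt (p : Bool) (w : List Bool) : Prop :=
  ∀ i (hi : i < w.length), w.get ⟨i, hi⟩ = xor p (decide (i % 2 = 1))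

lemma alt_nil (p : Bool) : Alt p [] := by intro i hi; simp at hi

lemma parity_flip (p : Bool) (i : ℕ) :
    xor p (decide ((i + 1) % 2 = 1)) = xor (!p) (decide (i % 2 = 1)) := by
  rcases Nat.mod_two_eq_zero_or_one i with h | h <;>
    simp [Nat.add_mod, h] <;> cases p <;> simp

lemma alt_cons {p y} {w : List Bool} (hy : y = p) (hw : Alt (!p) w) : Alt p (y :: w) := by
  intro i hi
  cases i with
  | zero => simpa using hy
  | succ i =>
    have := hw i (by simpa using hi)
    simpa [parity_flip] using this

lemma chain_alt : ∀ (o : List Bool) (p : Bool) (w : List Bool),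
    chainCheck p o = true → Alt (xor p (decide (o.length % 2 = 1))) w → Alt p (o ++ w) := by
  intro o
  induction o with
  | nil => intro p w _ hw; simpa using hw
  | cons y o ih =>
    intro p w hc hw
    simp only [chainCheck, Bool.and_eq_true, beq_iff_eq] at hc
    refine alt_cons hc.1 (ih (!p) w hc.2 ?_)
    have : xor p (decide ((o.length + 1) % 2 = 1)) = xor (!p) (decide (o.length % 2 = 1)) :=
      parity_flip p o.length
    rw [show (y :: o).length = o.length + 1 from rfl, this] at hw
    exact hw

def Slist : List (ℤ × TSt × TSt × TSt × Bool) :=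
  [(-2, .s22, .s00, .s00, false), (-2, .s22, .s11, .s21, false),
   (-2, .s22, .s21, .s00, false), (-2, .s22, .s21, .s21, false),
   (-1, .s11, .s00, .s00, false), (-1, .s11, .s11, .s21, false),
   (-1, .s11, .s21, .s00, false), (-1, .s11, .s21, .s21, false),
   (0, .s00, .s00, .s00, false), (0, .s21, .s00, .s00, false),
   (0, .s21, .s11, .s00, false), (0, .s21, .s11, .s21, false),
   (0, .s21, .s21, .s00, false), (0, .s21, .s21, .s21, false),
   (1, .s10, .s00, .s00, false), (1, .s12, .s00, .s00, false),
   (1, .s12, .s10, .s00, false), (1, .s12, .s12, .s10, false),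
   (1, .s12, .s12, .s12, true), (1, .s12, .s21, .s00, false),
   (1, .s12, .s21, .s21, false), (2, .s20, .s00, .s00, false),
   (2, .s22, .s00, .s00, false), (2, .s22, .s10, .s00, false),
   (2, .s22, .s12, .s10, false), (2, .s22, .s12, .s12, true),
   (2, .s22, .s21, .s00, false), (2, .s22, .s21, .s21, false)]

def stepOK (h : ℤ) (q : TSt × TSt × TSt) (p : Bool) (x : Bool) : Prop :=
  -2 ≤ h + (if x then -1 else 1) → h + (if x then -1 else 1) ≤ 2 →
    chainCheck p (cStep q x).2 = true ∧
    (h + (if x then -1 else 1), (cStep q x).1.1, (cStep q x).1.2.1, (cStep q x).1.2.2,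
      xor p (decide ((cStep q x).2.length % 2 = 1))) ∈ Slist

instance (h : ℤ) (q : TSt × TSt × TSt) (p x : Bool) : Decidable (stepOK h q p x) := by
  unfold stepOK; infer_instance

lemma closure : ∀ s ∈ Slist, ∀ x : Bool, stepOK s.1 (s.2.1, s.2.2.1, s.2.2.2.1) s.2.2.2.2 x := by
  decide

lemma keyB : ∀ (u : List Bool) (h : ℤ) (q1 q2 q3 : TSt) (p : Bool),
    (h, q1, q2, q3, p) ∈ Slist →
    (∀ pr, pr <+: u → -2 ≤ h + H pr ∧ h + H pr ≤ 2) →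
    Alt p (cRun (q1, q2, q3) u) := by
  intro u
  induction u with
  | nil => intro h q1 q2 q3 p _ _; exact alt_nil p
  | cons x u' ih =>
    intro h q1 q2 q3 p hmem hpr
    have hx : -2 ≤ h + (if x then -1 else 1) ∧ h + (if x then -1 else 1) ≤ 2 := by
      have := hpr [x] (List.cons_prefix_cons.mpr ⟨rfl, List.nil_prefix⟩)
      simpa [H] using this
    have hcl := closure _ hmem x hx.1 hx.2
    show Alt p ((cStep (q1, q2, q3) x).2 ++ cRun (cStep (q1, q2, q3) x).1 u')
    refine chain_alt _ _ _ hcl.1 ?_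
    have hnext := ih (h + (if x then -1 else 1)) (cStep (q1, q2, q3) x).1.1
      (cStep (q1, q2, q3) x).1.2.1 (cStep (q1, q2, q3) x).1.2.2
      (xor p (decide ((cStep (q1, q2, q3) x).2.length % 2 = 1))) hcl.2
      (fun pr hp => by
        have := hpr (x :: pr) (List.cons_prefix_cons.mpr ⟨rfl, hp⟩)
        simp only [H] at this
        constructor <;> omega)
    exact hnext

lemma partB (u : List Bool) (hu : ∀ pr, pr <+: u → -2 ≤ H pr ∧ H pr ≤ 2) :
    PrefixAB (tT (tT (tT u))) := by
  have hmem : ((0 : ℤ), TSt.s00, TSt.s00, TSt.s00, false) ∈ Slist := by decide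
  have := keyB u 0 .s00 .s00 .s00 false hmem (fun pr hp => by simpa using hu pr hp)
  rw [cRun_eq] at this
  intro i hi
  simpa [tT] using this i hi



lemma Habs (p : List Bool) : -(p.length : ℤ) ≤ H p ∧ H p ≤ (p.length : ℤ) := by
  induction p with
  | nil => simp [H]
  | cons x p ih =>
    simp only [H, List.length_cons]
    push_cast
    rcases Bool.dichotomy x with rfl | rfl <;> simp <;> omega

lemma core (u : List Bool) (m : ℕ) (h3 : 3 ≤ m) (hlt : 3 * u.length < 4 ^ (m - 3)) :
    PrefixAB (tT^[m] u) := by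
  set j := m - 3 with hj
  set n := u.length with hn
  -- height bound after j steps
  have hbound := iterA j u n (fun p hp => by
    have h1 := Habs p
    have h2 : p.length ≤ n := hp.length_le
    constructor <;> · push_cast; omega)
  have hG2 : fG^[j] n ≤ 2 := by
    have hgb := Gs_bound n j
    have h9 : 3 * fG^[j] n * 4 ^ j < 9 * 4 ^ j := by omega
    have := Nat.lt_of_mul_lt_mul_right h9
    omega
  have hsmall : ∀ pr, pr <+: tT^[j] u → -2 ≤ H pr ∧ H pr ≤ 2 := by
    intro pr hpr
    have := hbound pr hpr
    have : ((fG^[j] n : ℕ) : ℤ) ≤ 2 := by exact_mod_cast hG2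
    omega
  have hres := partB _ hsmall
  have hm : m = 3 + j := by omega
  rw [hm, Function.iterate_add_apply]
  have : tT^[3] (tT^[j] u) = tT (tT (tT (tT^[j] u))) := rfl
  rw [this]
  exact hres

lemma core_real (u : List Bool) (m : ℕ)
    (h : Real.logb 4 (4 * (u.length : ℝ) + 4 / 3) - Real.logb 4 (2 / 3) + 3 < (m : ℝ)) :
    PrefixAB (tT^[m] u) := by
  set n := u.length with hn
  have hrw : Real.logb 4 (4 * (n : ℝ) + 4 / 3) - Real.logb 4 (2 / 3)
      = Real.logb 4 (6 * (n : ℝ) + 2) := by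
    rw [← Real.logb_div (by positivity) (by norm_num)]
    congr 1
    field_simp
    ring
  rw [hrw] at h
  have hlogpos : 0 ≤ Real.logb 4 (6 * (n : ℝ) + 2) :=
    Real.logb_nonneg (by norm_num) (by push_cast; linarith [Nat.cast_nonneg (α := ℝ) n])
  have h3 : 3 ≤ m := by
    have : (3 : ℝ) < m := by linarith
    exact_mod_cast this.le
  have hm3 : Real.logb 4 (6 * (n : ℝ) + 2) < ((m - 3 : ℕ) : ℝ) := by
    have : ((m - 3 : ℕ) : ℝ) = (m : ℝ) - 3 := by
      push_cast [Nat.cast_sub h3]; ring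
    rw [this]; linarith
  have hx : (0 : ℝ) < 6 * (n : ℝ) + 2 := by positivity
  rw [Real.logb_lt_iff_lt_rpow (by norm_num) hx] at hm3
  rw [Real.rpow_natCast] at hm3
  have hnat : 6 * n + 2 < 4 ^ (m - 3) := by exact_mod_cast hm3
  exact core u m h3 (by omega)

end KS

/-- For every word `u` and every `m > log₄(4|u| + 4/3) − log₄(2/3) + 3`, the
iterate `t^m(u)` is a prefix of `(ab)^ω`; consequently, for any `k` there is
`n = O(log k)` such that `t^n(u)` is a prefix of `(ab)^ω` for all `u` of
length `k`. -/
theorem iterate_transducer_prefix_ab :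
    (∀ u : List Bool, ∀ m : ℕ,
      Real.logb 4 (4 * (u.length : ℝ) + 4 / 3) - Real.logb 4 (2 / 3) + 3 < (m : ℝ) →
      PrefixAB (tT^[m] u)) ∧
    ∃ C : ℝ, 0 < C ∧ ∀ k : ℕ, ∃ n : ℕ, (n : ℝ) ≤ C * Real.log (k + 2) ∧
      ∀ u : List Bool, u.length = k → PrefixAB (tT^[n] u) := by
  constructor
  · exact fun u m h => KS.core_real u m h
  · refine ⟨3 / Real.log 4 + 5 / Real.log 2, by positivity, fun k => ?_⟩
    set x := Real.logb 4 (6 * (k : ℝ) + 2) with hx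
    have hxpos : 0 ≤ x :=
      Real.logb_nonneg (by norm_num) (by push_cast; linarith [Nat.cast_nonneg (α := ℝ) k])
    refine ⟨⌈x⌉₊ + 4, ?_, fun u hu => ?_⟩
    · have hceil : (⌈x⌉₊ : ℝ) < x + 1 := Nat.ceil_lt_add_one hxpos
      have hl2 : (0 : ℝ) < Real.log 2 := Real.log_pos (by norm_num)
      have hl4 : (0 : ℝ) < Real.log 4 := Real.log_pos (by norm_num)
      have hlk : Real.log 2 ≤ Real.log ((k : ℝ) + 2) :=
        Real.log_le_log (by norm_num) (by linarith [Nat.cast_nonneg (α := ℝ) k])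
      have hlkpos : 0 < Real.log ((k : ℝ) + 2) := lt_of_lt_of_le hl2 hlk
      have hcube : 6 * (k : ℝ) + 2 ≤ ((k : ℝ) + 2) ^ 3 := by
        have : (0 : ℝ) ≤ (k : ℝ) := Nat.cast_nonneg k
        nlinarith [mul_nonneg (mul_nonneg this this) this, mul_nonneg this this]
      have hlog6 : Real.log (6 * (k : ℝ) + 2) ≤ 3 * Real.log ((k : ℝ) + 2) := by
        calc Real.log (6 * (k : ℝ) + 2) ≤ Real.log (((k : ℝ) + 2) ^ 3) :=
              Real.log_le_log (by positivity) hcube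
          _ = 3 * Real.log ((k : ℝ) + 2) := by rw [Real.log_pow]; push_cast; ring
      have hxle : x ≤ 3 / Real.log 4 * Real.log ((k : ℝ) + 2) := by
        rw [hx, Real.logb]
        rw [div_le_iff₀ hl4] at *
        calc Real.log (6 * (k : ℝ) + 2) ≤ 3 * Real.log ((k : ℝ) + 2) := hlog6
          _ = 3 / Real.log 4 * Real.log ((k : ℝ) + 2) * Real.log 4 := by field_simp
      have h5 : (5 : ℝ) ≤ 5 / Real.log 2 * Real.log ((k : ℝ) + 2) := by
        rw [div_mul_eq_mul_div, le_div_iff₀ hl2]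
        nlinarith
      push_cast
      have hfin : (⌈x⌉₊ : ℝ) + 4 < (3 / Real.log 4 + 5 / Real.log 2) * Real.log ((k : ℝ) + 2) := by
        calc (⌈x⌉₊ : ℝ) + 4 < (x + 1) + 4 := by linarith
          _ = x + 5 := by ring
          _ ≤ 3 / Real.log 4 * Real.log ((k : ℝ) + 2)
              + 5 / Real.log 2 * Real.log ((k : ℝ) + 2) := by linarith
          _ = (3 / Real.log 4 + 5 / Real.log 2) * Real.log ((k : ℝ) + 2) := by ring
      linarith
    · apply KS.core_real
      have hrw : Real.logb 4 (4 * (u.length : ℝ) + 4 / 3) - Real.logb 4 (2 / 3)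
          = Real.logb 4 (6 * (u.length : ℝ) + 2) := by
        rw [← Real.logb_div (by positivity) (by norm_num)]
        congr 1
        field_simp
        ring
      rw [hrw, hu]
      have : x ≤ (⌈x⌉₊ : ℝ) := Nat.le_ceil x
      push_cast
      linarith
end

section
/- Let s^k = (s^k_1,…,s^k_T) be the k-th avalanche and, for a time t < T, set r_t = max{s^k_1,…,s^k_t}. Then: (i) if s^k_{t+1} < r_t, then s^k_{t+1} is the largest column i such that i < r_t and i does not occur in (s^k_1,…,s^k_t), and moreover r_t − s^k_{t+1} < D−1; (ii) if s^k_{t+1} > r_t, then s^k_{t+1} ≤ r_t + D−1. -/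
open scoped Classical

/-- A configuration of KSPM: a sequence of height differences. -/
abbrev Config := ℕ → ℕ

/-- The result of firing column `i` in configuration `σ` (KSPM(D) rule). -/
def fireAt (D : ℕ) (σ : Config) (i : ℕ) : Config := fun j =>
  if j = i then σ i - D
  else if j + 1 = i then σ j + (D - 1)
  else if j = i + D - 1 then σ j + 1
  else σ j

/-- `σ →_i σ'` : column `i` can be fired in `σ`, producing `σ'`. -/
def Step (D : ℕ) (σ : Config) (i : ℕ) (σ' : Config) : Prop :=
  D ≤ σ i ∧ σ' = fireAt D σ i

/-- `σ → σ'`. -/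
def StepRel (D : ℕ) (σ σ' : Config) : Prop := ∃ i, Step D σ i σ'

/-- `σ →* σ'`. -/
def Reaches (D : ℕ) : Config → Config → Prop := Relation.ReflTransGen (StepRel D)

/-- A configuration is stable (a fixed point) when no transition applies. -/
def Stable (D : ℕ) (σ : Config) : Prop := ∀ i, σ i < D

/-- `Exec D σ s σ'` : the strategy `s` leads from `σ` to `σ'`. -/
def Exec (D : ℕ) : Config → List ℕ → Config → Prop
  | σ, [], σ' => σ' = σ
  | σ, i :: s, σ' => D ≤ σ i ∧ Exec D (fireAt D σ i) s σ'

/-- The initial configuration with `N` stacked grains on column 0. -/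
def grains (N : ℕ) : Config := fun i => if i = 0 then N else 0

/-- `σ^{↓0}` : one grain added on column 0. -/
def addGrain (σ : Config) : Config := fun i => if i = 0 then σ i + 1 else σ i

/-- `π(σ)` : the (unique) stable configuration reachable from `σ`. -/
noncomputable def piCfg (D : ℕ) (σ : Config) : Config :=
  Classical.epsilon fun μ => Reaches D σ μ ∧ Stable D μ

/-- `π(N)` : the stable configuration reached from `N` stacked grains. -/
noncomputable def piN (D N : ℕ) : Config := piCfg D (grains N)

/-- The `k`-th avalanche: the lexicographically least strategy from
`π(k−1)^{↓0}` to `π(k)`. -/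
noncomputable def avalanche (D k : ℕ) : List ℕ :=
  Classical.epsilon fun s =>
    Exec D (addGrain (piN D (k - 1))) s (piN D k) ∧
    ∀ s', Exec D (addGrain (piN D (k - 1))) s' (piN D k) →
      s = s' ∨ List.Lex (· < ·) s s'

/-- `p` is a peak of the strategy `s` : it is fired at some time, and is
larger than every previously fired column. -/
def IsPeak (s : List ℕ) (p : ℕ) : Prop :=
  ∃ t : Fin s.length, s.get t = p ∧ ∀ t' : Fin s.length, t' < t → s.get t' < p

/-- An avalanche is dense from `l` : with `m` its greatest fired column, every
column of `[l, m]` is fired. -/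
def DenseFrom (s : List ℕ) (l : ℕ) : Prop :=
  ∃ m, (∀ i, l ≤ i → i ≤ m → i ∈ s) ∧ ∀ i, m < i → i ∉ s

/-- `L'(D,k)` : the least column from which the `k`-th avalanche is dense. -/
noncomputable def Lp (D k : ℕ) : ℕ := sInf {l | DenseFrom (avalanche D k) l}

/-- The global density column `L(D,N)`. -/
noncomputable def Lgdc (D N : ℕ) : ℕ := (Finset.Icc 1 N).sup (Lp D)

/-- Indices `k ∈ [1,N]` of the long avalanches up to `N` (those firing column
`L(D,N)+D−1`), in increasing order: this enumerates `Φ(D,N)`. -/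
noncomputable def longList (D N : ℕ) : List ℕ :=
  (List.range (N + 1)).filter fun k =>
    decide (1 ≤ k ∧ Lgdc D N + D - 1 ∈ avalanche D k)

/-! ### Auxiliary development -/

section Aux

variable {D : ℕ}

lemma fireAt_le_other {σ : Config} {i j : ℕ} (h : j ≠ i) : σ j ≤ fireAt D σ i j := by
  unfold fireAt
  split_ifs <;> omega

lemma fireAt_comm {σ : Config} {i j : ℕ} (hij : i ≠ j) (hi : D ≤ σ i) (hj : D ≤ σ j) :
    fireAt D (fireAt D σ i) j = fireAt D (fireAt D σ j) i := by
  funext x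
  simp only [fireAt]
  by_cases h1 : x = i
  · subst h1; split_ifs <;> omega
  · by_cases h2 : x = j
    · subst h2; split_ifs <;> omega
    · split_ifs <;> omega

lemma exec_nil {σ μ : Config} : Exec D σ [] μ ↔ μ = σ := Iff.rfl

lemma exec_cons {σ μ : Config} {i : ℕ} {s : List ℕ} :
    Exec D σ (i :: s) μ ↔ D ≤ σ i ∧ Exec D (fireAt D σ i) s μ := Iff.rfl

lemma exec_append {σ μ : Config} {s t : List ℕ} :
    Exec D σ (s ++ t) μ ↔ ∃ τ, Exec D σ s τ ∧ Exec D τ t μ := by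
  induction s generalizing σ with
  | nil =>
    simp only [List.nil_append]
    exact ⟨fun h => ⟨σ, rfl, h⟩, fun ⟨τ, hτ, h⟩ => by rwa [exec_nil.1 hτ] at h⟩
  | cons i s ih =>
    simp only [List.cons_append, exec_cons, ih]
    exact ⟨fun ⟨h1, τ, h2, h3⟩ => ⟨τ, ⟨h1, h2⟩, h3⟩, fun ⟨τ, ⟨h1, h2⟩, h3⟩ => ⟨h1, τ, h2, h3⟩⟩

/-- Apply a strategy. -/
def applyL (D : ℕ) (σ : Config) (s : List ℕ) : Config := s.foldl (fireAt D) σ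

lemma applyL_nil {σ : Config} : applyL D σ [] = σ := rfl

lemma applyL_append {σ : Config} {s t : List ℕ} :
    applyL D σ (s ++ t) = applyL D (applyL D σ s) t := by
  simp [applyL]

lemma exec_applyL {σ μ : Config} {s : List ℕ} (h : Exec D σ s μ) : μ = applyL D σ s := by
  induction s generalizing σ with
  | nil => exact h
  | cons i s ih => exact ih h.2

lemma exec_mono {σ μ : Config} {s : List ℕ} (h : Exec D σ s μ) {j : ℕ} (hj : j ∉ s) :
    σ j ≤ μ j := by
  induction s generalizing σ with
  | nil => rw [exec_nil.1 h]
  | cons i s ih =>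
    have h1 : j ≠ i := fun e => hj (e ▸ (List.mem_cons_self : i ∈ i :: s))
    exact le_trans (fireAt_le_other h1) (ih h.2 (fun hm => hj (List.mem_cons_of_mem i hm)))

lemma exec_peel {σ μ : Config} {s : List ℕ} (h : Exec D σ s μ) (hμ : Stable D μ)
    {i : ℕ} (hi : D ≤ σ i) :
    ∃ s', Exec D (fireAt D σ i) s' μ ∧ s'.length + 1 = s.length := by
  induction s generalizing σ with
  | nil => exact absurd ((exec_nil.1 h) ▸ hi) (not_le.2 (hμ i))
  | cons j s ih =>
    obtain ⟨hj, h2⟩ := h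
    by_cases hji : j = i
    · subst hji; exact ⟨s, h2, rfl⟩
    · have hi' : D ≤ fireAt D σ j i := le_trans hi (fireAt_le_other (Ne.symm hji))
      obtain ⟨s', hs', hl⟩ := ih h2 hi'
      rw [fireAt_comm (show j ≠ i from hji) hj hi] at hs'
      exact ⟨j :: s', ⟨le_trans hj (fireAt_le_other hji), hs'⟩, by simp [← hl]⟩

lemma exec_length_eq {μ : Config} (hμ : Stable D μ) :
    ∀ {s s' : List ℕ} {σ : Config}, Exec D σ s μ → Exec D σ s' μ → s.length = s'.length := by
  intro s
  induction s with
  | nil =>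
    intro s' σ h h'
    cases s' with
    | nil => rfl
    | cons j t => exact absurd ((exec_nil.1 h) ▸ h'.1) (not_le.2 (hμ j))
  | cons i s ih =>
    intro s' σ h h'
    obtain ⟨s'', h'', hl⟩ := exec_peel h' hμ h.1
    have := ih h.2 h''
    simp only [List.length_cons, this, hl]

lemma exec_stable_unique {μ₁ μ₂ : Config} (h1 : Stable D μ₁) (h2 : Stable D μ₂) :
    ∀ {s' s : List ℕ} {σ : Config}, Exec D σ s μ₁ → Exec D σ s' μ₂ → μ₁ = μ₂ := by
  intro s'
  induction s' with
  | nil =>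
    intro s σ h h'
    cases s with
    | nil => rw [exec_nil.1 h, exec_nil.1 h']
    | cons j t => exact absurd ((exec_nil.1 h') ▸ h.1) (not_le.2 (h2 j))
  | cons j t ih =>
    intro s σ h h'
    obtain ⟨s'', h'', _⟩ := exec_peel h h1 h'.1
    exact ih h'' h'.2

lemma reaches_iff_exec {σ μ : Config} : Reaches D σ μ ↔ ∃ s, Exec D σ s μ := by
  constructor
  · intro h
    induction h with
    | refl => exact ⟨[], rfl⟩
    | tail _ hbc ih =>
      obtain ⟨s, hs⟩ := ih
      obtain ⟨i, hi, hc⟩ := hbc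
      exact ⟨s ++ [i], exec_append.2 ⟨_, hs, ⟨hi, hc⟩⟩⟩
  · rintro ⟨s, hs⟩
    induction s generalizing σ with
    | nil => rw [exec_nil.1 hs]; exact Relation.ReflTransGen.refl
    | cons i s ih => exact Relation.ReflTransGen.head ⟨i, hs.1, rfl⟩ (ih hs.2)

end Aux

section Term

variable {D : ℕ}

/-- Support bound. -/
def SuppB (σ : Config) (n : ℕ) : Prop := ∀ j, n ≤ j → σ j = 0

lemma suppB_mono {σ : Config} {n m : ℕ} (h : SuppB σ n) (hnm : n ≤ m) : SuppB σ m :=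
  fun j hj => h j (le_trans hnm hj)

/-- Conserved mass. -/
def Mw (σ : Config) (n : ℕ) : ℕ := ∑ x ∈ Finset.range n, (x + 1) * σ x

/-- Increasing potential. -/
def Pw (σ : Config) (n : ℕ) : ℕ := ∑ x ∈ Finset.range n, (x * (x + 1)) * σ x

lemma sumw_ext (w : ℕ → ℕ) {σ : Config} {n m : ℕ} (h : SuppB σ n) (hnm : n ≤ m) :
    ∑ x ∈ Finset.range m, w x * σ x = ∑ x ∈ Finset.range n, w x * σ x := by
  refine (Finset.sum_subset (Finset.range_subset_range.2 hnm) ?_).symm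
  intro x _ hx
  rw [h x (by simpa using hx), mul_zero]

lemma Mw_ext {σ : Config} {n m : ℕ} (h : SuppB σ n) (hnm : n ≤ m) : Mw σ m = Mw σ n :=
  sumw_ext _ h hnm

lemma Pw_ext {σ : Config} {n m : ℕ} (h : SuppB σ n) (hnm : n ≤ m) : Pw σ m = Pw σ n :=
  sumw_ext _ h hnm

lemma Pw_le_sq {σ : Config} {n : ℕ} : Pw σ n ≤ Mw σ n * Mw σ n := by
  have key : ∀ x ∈ Finset.range n, (x * (x + 1)) * σ x ≤ Mw σ n * ((x + 1) * σ x) := by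
    intro x hx
    rcases Nat.eq_zero_or_pos (σ x) with h | h
    · simp [h]
    · have h1 : (x + 1) * σ x ≤ Mw σ n :=
        Finset.single_le_sum (f := fun x => (x + 1) * σ x) (fun y _ => Nat.zero_le _) hx
      have h2 : x ≤ Mw σ n := le_trans (by nlinarith) h1
      calc (x * (x + 1)) * σ x = x * ((x + 1) * σ x) := by ring
        _ ≤ Mw σ n * ((x + 1) * σ x) := Nat.mul_le_mul_right _ h2
  calc Pw σ n ≤ ∑ x ∈ Finset.range n, Mw σ n * ((x + 1) * σ x) := Finset.sum_le_sum key
    _ = Mw σ n * Mw σ n := by rw [← Finset.mul_sum]; rfl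

lemma fireable_lt {σ : Config} {n i : ℕ} (hD : 2 ≤ D) (hs : SuppB σ n) (hi : D ≤ σ i) : i < n := by
  by_contra h
  have := hs i (by omega)
  omega

lemma suppB_fireAt {σ : Config} {n i : ℕ} (hD : 2 ≤ D) (hs : SuppB σ n) (hi : D ≤ σ i) :
    SuppB (fireAt D σ i) (n + D) := by
  have hin : i < n := fireable_lt hD hs hi
  intro j hj
  have h0 : σ j = 0 := hs j (by omega)
  unfold fireAt
  rw [if_neg (by omega), if_neg (by omega), if_neg (by omega), h0]

lemma sum_fire (hD : 2 ≤ D) (w : ℕ → ℕ) {σ : Config} {i n : ℕ} (hi : D ≤ σ i)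
    (hin : i + D ≤ n) :
    (∑ x ∈ Finset.range n, w x * fireAt D σ i x) + w i * D
      = (∑ x ∈ Finset.range n, w x * σ x)
        + (if 1 ≤ i then w (i - 1) * (D - 1) else 0) + w (i + D - 1) := by
  have key : ∀ x, w x * fireAt D σ i x + (if x = i then w i * D else 0)
      = w x * σ x + (if x + 1 = i then w x * (D - 1) else 0)
        + (if x = i + D - 1 then w x else 0) := by
    intro x
    by_cases h1 : x = i
    · subst h1
      rw [show fireAt D σ x x = σ x - D by simp [fireAt]]
      rw [if_pos rfl, if_neg (show ¬x + 1 = x by omega),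
        if_neg (show ¬x = x + D - 1 by omega)]
      have he : σ x - D + D = σ x := by omega
      calc w x * (σ x - D) + w x * D = w x * (σ x - D + D) := by ring
        _ = w x * σ x + 0 + 0 := by rw [he]; ring
    · have hf : fireAt D σ i x
          = if x + 1 = i then σ x + (D - 1) else if x = i + D - 1 then σ x + 1 else σ x := by
        simp [fireAt, h1]
      rw [hf, if_neg h1]
      by_cases h2 : x + 1 = i
      · rw [if_pos h2, if_pos h2, if_neg (show ¬x = i + D - 1 by omega)]; ring
      · rw [if_neg h2, if_neg h2]
        by_cases h3 : x = i + D - 1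
        · rw [if_pos h3, if_pos h3]; ring
        · rw [if_neg h3, if_neg h3]
  have hsum := Finset.sum_congr rfl (fun x (_ : x ∈ Finset.range n) => key x)
  rw [Finset.sum_add_distrib, Finset.sum_add_distrib, Finset.sum_add_distrib] at hsum
  have e1 : (∑ x ∈ Finset.range n, if x = i then w i * D else 0) = w i * D := by
    rw [Finset.sum_ite_eq' (Finset.range n) i (fun _ => w i * D),
      if_pos (Finset.mem_range.2 (by omega))]
  have e2 : (∑ x ∈ Finset.range n, if x + 1 = i then w x * (D - 1) else 0)
      = if 1 ≤ i then w (i - 1) * (D - 1) else 0 := by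
    by_cases h : 1 ≤ i
    · rw [if_pos h, Finset.sum_eq_single (i - 1)]
      · rw [if_pos (by omega)]
      · intro b _ hb; rw [if_neg (by omega)]
      · intro h2; exact absurd (Finset.mem_range.2 (by omega)) h2
    · rw [if_neg h]
      exact Finset.sum_eq_zero fun b _ => by rw [if_neg (by omega)]
  have e3 : (∑ x ∈ Finset.range n, if x = i + D - 1 then w x else 0) = w (i + D - 1) := by
    rw [Finset.sum_eq_single (i + D - 1)]
    · rw [if_pos rfl]
    · intro b _ hb; rw [if_neg hb]
    · intro h2; exact absurd (Finset.mem_range.2 (by omega)) h2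
  rw [e1, e2, e3] at hsum
  linarith

lemma Mw_fire (hD : 2 ≤ D) {σ : Config} {i n : ℕ} (hi : D ≤ σ i) (hin : i + D ≤ n) :
    Mw (fireAt D σ i) n = Mw σ n := by
  have h := sum_fire hD (fun x => x + 1) hi hin
  obtain ⟨d, rfl⟩ : ∃ d, D = d + 2 := ⟨D - 2, by omega⟩
  unfold Mw
  by_cases h1 : 1 ≤ i
  · rw [if_pos h1] at h
    have e1 : i - 1 + 1 = i := by omega
    have e2 : i + (d + 2) - 1 + 1 = i + d + 2 := by omega
    have e3 : d + 2 - 1 = d + 1 := by omega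
    rw [e1, e2, e3] at h
    nlinarith [h]
  · have hi0 : i = 0 := by omega
    subst hi0
    rw [if_neg h1] at h
    have e2 : 0 + (d + 2) - 1 + 1 = d + 2 := by omega
    rw [e2] at h
    nlinarith [h]

lemma Pw_fire (hD : 2 ≤ D) {σ : Config} {i n : ℕ} (hi : D ≤ σ i) (hin : i + D ≤ n) :
    Pw (fireAt D σ i) n = Pw σ n + D * (D - 1) := by
  have h := sum_fire hD (fun x => x * (x + 1)) hi hin
  obtain ⟨d, rfl⟩ : ∃ d, D = d + 2 := ⟨D - 2, by omega⟩
  unfold Pw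
  have e3 : d + 2 - 1 = d + 1 := by omega
  rw [e3] at h ⊢
  by_cases h1 : 1 ≤ i
  · obtain ⟨i', rfl⟩ : ∃ i', i = i' + 1 := ⟨i - 1, by omega⟩
    rw [if_pos h1] at h
    have e1 : i' + 1 - 1 = i' := by omega
    have e2 : i' + 1 + (d + 2) - 1 = i' + d + 2 := by omega
    rw [e1, e2] at h
    nlinarith [h]
  · have hi0 : i = 0 := by omega
    subst hi0
    rw [if_neg h1] at h
    have e2 : 0 + (d + 2) - 1 = d + 1 := by omega
    rw [e2] at h
    nlinarith [h]

lemma exists_stable_aux (hD : 2 ≤ D) :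
    ∀ (K : ℕ) (σ : Config) (n : ℕ), SuppB σ n → Mw σ n * Mw σ n ≤ Pw σ n + K →
      ∃ μ, Reaches D σ μ ∧ Stable D μ := by
  intro K
  induction K with
  | zero =>
    intro σ n hs hb
    by_cases hst : Stable D σ
    · exact ⟨σ, Relation.ReflTransGen.refl, hst⟩
    · exfalso
      obtain ⟨i, hi⟩ : ∃ i, D ≤ σ i := by
        simpa [Stable, not_forall, not_lt] using hst
      have hin : i < n := fireable_lt hD hs hi
      set n' := n + D with hn'
      have hs' : SuppB (fireAt D σ i) n' := suppB_fireAt hD hs hi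
      have hM : Mw (fireAt D σ i) n' = Mw σ n :=
        (Mw_fire hD hi (by omega)).trans (Mw_ext hs (by omega))
      have hP : Pw (fireAt D σ i) n' = Pw σ n + D * (D - 1) := by
        rw [Pw_fire hD hi (by omega), Pw_ext hs (by omega)]
      have hb2 : Pw (fireAt D σ i) n' ≤ Mw (fireAt D σ i) n' * Mw (fireAt D σ i) n' := Pw_le_sq
      rw [hM, hP] at hb2
      have h2 : 2 ≤ D * (D - 1) := by
        obtain ⟨d, rfl⟩ : ∃ d, D = d + 2 := ⟨D - 2, by omega⟩
        rw [show d + 2 - 1 = d + 1 by omega]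
        nlinarith
      omega
  | succ K ih =>
    intro σ n hs hb
    by_cases hst : Stable D σ
    · exact ⟨σ, Relation.ReflTransGen.refl, hst⟩
    · obtain ⟨i, hi⟩ : ∃ i, D ≤ σ i := by
        simpa [Stable, not_forall, not_lt] using hst
      have hin : i < n := fireable_lt hD hs hi
      set n' := n + D with hn'
      have hs' : SuppB (fireAt D σ i) n' := suppB_fireAt hD hs hi
      have hM : Mw (fireAt D σ i) n' = Mw σ n :=
        (Mw_fire hD hi (by omega)).trans (Mw_ext hs (by omega))
      have hP : Pw (fireAt D σ i) n' = Pw σ n + D * (D - 1) := by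
        rw [Pw_fire hD hi (by omega), Pw_ext hs (by omega)]
      have h2 : 2 ≤ D * (D - 1) := by
        obtain ⟨d, rfl⟩ : ∃ d, D = d + 2 := ⟨D - 2, by omega⟩
        rw [show d + 2 - 1 = d + 1 by omega]
        nlinarith
      have hb' : Mw (fireAt D σ i) n' * Mw (fireAt D σ i) n' ≤ Pw (fireAt D σ i) n' + K := by
        rw [hM, hP]; omega
      obtain ⟨μ, hr, hst'⟩ := ih (fireAt D σ i) n' hs' hb'
      exact ⟨μ, Relation.ReflTransGen.head ⟨i, hi, rfl⟩ hr, hst'⟩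

lemma exists_stable (hD : 2 ≤ D) {σ : Config} {n : ℕ} (hs : SuppB σ n) :
    ∃ μ, Reaches D σ μ ∧ Stable D μ :=
  exists_stable_aux hD (Mw σ n * Mw σ n) σ n hs (by omega)

end Term

section Spec

variable {D k : ℕ}

lemma suppB_grains (N : ℕ) : SuppB (grains N) 1 := by
  intro j hj
  simp [grains]
  omega

lemma piN_spec (hD : 2 ≤ D) (N : ℕ) : Reaches D (grains N) (piN D N) ∧ Stable D (piN D N) :=
  Classical.epsilon_spec (exists_stable hD (suppB_grains N))

lemma exec_suppB {σ μ : Config} {s : List ℕ} {n : ℕ} (hD : 2 ≤ D) (h : Exec D σ s μ)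
    (hs : SuppB σ n) : SuppB μ (n + D * s.length) := by
  induction s generalizing σ n with
  | nil => simpa using suppB_mono (by rwa [← exec_nil.1 h] at hs) (by omega)
  | cons i s ih =>
    have := ih h.2 (suppB_fireAt hD hs h.1)
    have e : n + D + D * s.length = n + D * (i :: s).length := by
      simp [List.length_cons]; ring
    rwa [e] at this

lemma piN_suppB (hD : 2 ≤ D) (N : ℕ) : ∃ n, SuppB (piN D N) n := by
  obtain ⟨s, hs⟩ := reaches_iff_exec.1 (piN_spec hD N).1
  exact ⟨1 + D * s.length, exec_suppB hD hs (suppB_grains N)⟩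

lemma addGrain_suppB {σ : Config} {n : ℕ} (hs : SuppB σ n) : SuppB (addGrain σ) (n + 1) := by
  intro j hj
  simp only [addGrain]
  rw [if_neg (by omega)]
  exact hs j (by omega)

lemma addGrain_fireAt {σ : Config} {i : ℕ} (hD : 2 ≤ D) (hi : D ≤ σ i) :
    addGrain (fireAt D σ i) = fireAt D (addGrain σ) i := by
  funext x
  by_cases hi0 : i = 0
  · subst hi0
    by_cases hx : x = 0
    · subst hx
      simp only [addGrain, fireAt]
      split_ifs <;> omega
    · simp only [addGrain, fireAt]
      split_ifs <;> omega
  · by_cases hx : x = 0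
    · subst hx
      simp only [addGrain, fireAt]
      split_ifs <;> omega
    · simp only [addGrain, fireAt]
      split_ifs <;> omega

lemma addGrain_reaches {σ μ : Config} (hD : 2 ≤ D) (h : Reaches D σ μ) :
    Reaches D (addGrain σ) (addGrain μ) := by
  induction h with
  | refl => exact Relation.ReflTransGen.refl
  | tail _ hbc ih =>
    obtain ⟨i, hi, hc⟩ := hbc
    refine Relation.ReflTransGen.tail ih ⟨i, ?_, ?_⟩
    · calc D ≤ _ := hi
        _ ≤ addGrain _ i := by simp only [addGrain]; split_ifs <;> omega
    · rw [hc, addGrain_fireAt hD hi]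

lemma grains_succ (hk : 1 ≤ k) : grains k = addGrain (grains (k - 1)) := by
  funext j
  simp only [grains, addGrain]
  split_ifs <;> omega

lemma exists_exec_avalanche (hD : 2 ≤ D) (hk : 1 ≤ k) :
    ∃ s, Exec D (addGrain (piN D (k - 1))) s (piN D k) := by
  obtain ⟨hr1, hst1⟩ := piN_spec hD k
  obtain ⟨hr0, hst0⟩ := piN_spec hD (k - 1)
  have h3 : Reaches D (grains k) (addGrain (piN D (k - 1))) := by
    rw [grains_succ hk]
    exact addGrain_reaches hD hr0
  obtain ⟨n0, hs0⟩ := piN_suppB hD (k - 1)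
  have hsσ : SuppB (addGrain (piN D (k - 1))) (n0 + 1) := addGrain_suppB hs0
  obtain ⟨μ, hrμ, hstμ⟩ := exists_stable hD hsσ
  have hμ : μ = piN D k := by
    obtain ⟨s1, hs1⟩ := reaches_iff_exec.1 (Relation.ReflTransGen.trans h3 hrμ)
    obtain ⟨s2, hs2⟩ := reaches_iff_exec.1 hr1
    exact exec_stable_unique hstμ hst1 hs1 hs2
  obtain ⟨s, hs⟩ := reaches_iff_exec.1 hrμ
  exact ⟨s, hμ ▸ hs⟩

lemma lexmin_exists {μ : Config} (hμ : Stable D μ) :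
    ∀ (n : ℕ) (σ : Config), (∃ s₀, Exec D σ s₀ μ ∧ s₀.length = n) →
      ∃ m, Exec D σ m μ ∧ ∀ s, Exec D σ s μ → m = s ∨ List.Lex (· < ·) m s := by
  intro n
  induction n with
  | zero =>
    rintro σ ⟨s₀, h, hl⟩
    rw [List.length_eq_zero_iff] at hl
    subst hl
    refine ⟨[], h, fun s hs => Or.inl ?_⟩
    have := exec_length_eq hμ h hs
    exact (List.length_eq_zero_iff.1 this.symm).symm
  | succ n ih =>
    rintro σ ⟨s₀, h, hl⟩
    have hne : Set.Nonempty {a | ∃ t, Exec D σ (a :: t) μ} := by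
      cases s₀ with
      | nil => simp at hl
      | cons i t => exact ⟨i, t, h⟩
    obtain ⟨ta, hta⟩ := Nat.sInf_mem hne
    set a := sInf {a | ∃ t, Exec D σ (a :: t) μ} with ha
    have hlen : ta.length = n := by
      have := exec_length_eq hμ hta h
      simpa [hl] using this
    obtain ⟨m', hm', hmin'⟩ := ih (fireAt D σ a) ⟨ta, (exec_cons.1 hta).2, hlen⟩
    refine ⟨a :: m', exec_cons.2 ⟨(exec_cons.1 hta).1, hm'⟩, fun s hs => ?_⟩
    cases s with
    | nil =>
      have := exec_length_eq hμ hs (exec_cons.2 ⟨(exec_cons.1 hta).1, hm'⟩)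
      simp at this
    | cons b tb =>
      have hab : a ≤ b := Nat.sInf_le ⟨tb, hs⟩
      rcases lt_or_eq_of_le hab with hlt | heq
      · exact Or.inr (List.Lex.rel hlt)
      · subst heq
        rcases hmin' tb (exec_cons.1 hs).2 with he | hlex
        · exact Or.inl (by rw [he])
        · exact Or.inr (List.Lex.cons hlex)

lemma avalanche_spec (hD : 2 ≤ D) (hk : 1 ≤ k) :
    Exec D (addGrain (piN D (k - 1))) (avalanche D k) (piN D k) ∧
      ∀ s', Exec D (addGrain (piN D (k - 1))) s' (piN D k) →
        avalanche D k = s' ∨ List.Lex (· < ·) (avalanche D k) s' := by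
  have hst : Stable D (piN D k) := (piN_spec hD k).2
  obtain ⟨s₀, hs₀⟩ := exists_exec_avalanche hD hk
  exact Classical.epsilon_spec (lexmin_exists hst s₀.length _ ⟨s₀, hs₀, rfl⟩)

lemma lex_of_append {p u v : List ℕ} (h : List.Lex (· < ·) (p ++ u) (p ++ v)) :
    List.Lex (· < ·) u v := by
  induction p with
  | nil => exact h
  | cons a p ih =>
    cases h with
    | cons h => exact ih h
    | rel h => exact absurd h (lt_irrefl a)

end Spec

section Count

variable {D : ℕ}

lemma count_formula (hD : 2 ≤ D) {σ μ : Config} {s : List ℕ} (h : Exec D σ s μ) (i : ℕ) :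
    μ i + D * s.count i
      = σ i + (D - 1) * s.count (i + 1)
        + (if D - 1 ≤ i then s.count (i - (D - 1)) else 0) := by
  induction s generalizing σ with
  | nil => simp [exec_nil.1 h]
  | cons j tl ih =>
    obtain ⟨hj, h2⟩ := exec_cons.1 h
    have H := ih h2
    simp only [List.count_cons, beq_iff_eq]
    simp only [fireAt] at H
    simp only [Nat.mul_add, mul_ite, mul_one, mul_zero]
    by_cases hij : i = j
    · subst hij
      split_ifs at H ⊢ <;> omega
    · split_ifs at H ⊢ <;> omega

end Count

section Main

variable {D k : ℕ}

/-- The configuration after `t` steps of the `k`-th avalanche. -/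
noncomputable def cfgA (D k t : ℕ) : Config :=
  applyL D (addGrain (piN D (k - 1))) ((avalanche D k).take t)

lemma cfgA_zero : cfgA D k 0 = addGrain (piN D (k - 1)) := rfl

lemma exec_take (hD : 2 ≤ D) (hk : 1 ≤ k) (t : ℕ) :
    Exec D (addGrain (piN D (k - 1))) ((avalanche D k).take t) (cfgA D k t) ∧
      Exec D (cfgA D k t) ((avalanche D k).drop t) (piN D k) := by
  have h := (avalanche_spec hD hk).1
  rw [← List.take_append_drop t (avalanche D k)] at h
  obtain ⟨τ, h1, h2⟩ := exec_append.1 h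
  have he : τ = cfgA D k t := exec_applyL h1
  subst he
  exact ⟨h1, h2⟩

lemma take_succ_elem {t : ℕ} (ht : t < (avalanche D k).length) :
    (avalanche D k).take (t + 1) = (avalanche D k).take t ++ [(avalanche D k)[t]] := by
  rw [List.take_succ, List.getElem?_eq_getElem ht]
  rfl

lemma cfgA_succ (hD : 2 ≤ D) (hk : 1 ≤ k) {t : ℕ} (ht : t < (avalanche D k).length) :
    cfgA D k (t + 1) = fireAt D (cfgA D k t) ((avalanche D k)[t]) := by
  unfold cfgA
  rw [take_succ_elem ht, applyL_append]
  rfl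

lemma fire_ok (hD : 2 ≤ D) (hk : 1 ≤ k) {t : ℕ} (ht : t < (avalanche D k).length) :
    D ≤ cfgA D k t ((avalanche D k)[t]) := by
  have h := (exec_take hD hk t).2
  rw [List.drop_eq_getElem_cons ht] at h
  exact (exec_cons.1 h).1

lemma sig0_lt (hD : 2 ≤ D) {i : ℕ} (hi : 1 ≤ i) : addGrain (piN D (k - 1)) i < D := by
  have := (piN_spec hD (k - 1)).2 i
  simp only [addGrain]
  rw [if_neg (by omega)]
  exact this

lemma sig0_le0 (hD : 2 ≤ D) : addGrain (piN D (k - 1)) 0 ≤ D := by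
  have h := (piN_spec hD (k - 1)).2 0
  have e : addGrain (piN D (k - 1)) 0 = piN D (k - 1) 0 + 1 := by simp [addGrain]
  omega

lemma cntF (hD : 2 ≤ D) (hk : 1 ≤ k) (t i : ℕ) :
    cfgA D k t i + D * ((avalanche D k).take t).count i
      = addGrain (piN D (k - 1)) i + (D - 1) * ((avalanche D k).take t).count (i + 1)
        + (if D - 1 ≤ i then ((avalanche D k).take t).count (i - (D - 1)) else 0) :=
  count_formula hD (exec_take hD hk t).1 i

lemma count_le_one (hD : 2 ≤ D) (hk : 1 ≤ k) (j : ℕ) : (avalanche D k).count j ≤ 1 := by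
  by_contra hcon
  push_neg at hcon
  have hbad : ∃ t, ∃ j, 2 ≤ ((avalanche D k).take t).count j :=
    ⟨(avalanche D k).length, j, by rw [List.take_length]; omega⟩
  obtain ⟨j0, hj0⟩ := Nat.find_spec hbad
  have ht0pos : Nat.find hbad ≠ 0 := by
    intro h
    rw [h] at hj0
    simp at hj0
  obtain ⟨t, hteq⟩ : ∃ t, Nat.find hbad = t + 1 := ⟨Nat.find hbad - 1, by omega⟩
  have hnot := Nat.find_min hbad (show t < Nat.find hbad by omega)
  push_neg at hnot
  rw [hteq] at hj0
  have htlen : t < (avalanche D k).length := by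
    by_contra h
    push_neg at h
    have e1 : (avalanche D k).take (t + 1) = (avalanche D k).take t := by
      rw [List.take_of_length_le h, List.take_of_length_le (by omega)]
    rw [e1] at hj0
    exact absurd hj0 (by have := hnot j0; omega)
  have hsplit : ((avalanche D k).take (t + 1)).count j0
      = ((avalanche D k).take t).count j0
        + (if (avalanche D k)[t] = j0 then 1 else 0) := by
    rw [take_succ_elem htlen, List.count_append]
    simp [List.count_singleton', beq_iff_eq]
  have hcle := hnot j0
  have hval : (avalanche D k)[t] = j0 := by
    by_contra h
    rw [hsplit, if_neg h] at hj0
    omega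
  have hcnt1 : ((avalanche D k).take t).count j0 = 1 := by
    rw [hsplit, if_pos hval] at hj0
    omega
  have hfire : D ≤ cfgA D k t j0 := hval ▸ fire_ok hD hk htlen
  have hC := cntF hD hk t j0
  rw [hcnt1] at hC
  have hc2 := hnot (j0 + 1)
  have hc2' : (D - 1) * (((avalanche D k).take t).count (j0 + 1)) ≤ D - 1 := by
    calc (D - 1) * (((avalanche D k).take t).count (j0 + 1)) ≤ (D - 1) * 1 :=
          Nat.mul_le_mul_left _ (by omega)
      _ = D - 1 := mul_one _
  rcases Nat.eq_zero_or_pos j0 with h0 | h0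
  · subst h0
    rw [if_neg (by omega)] at hC
    have := sig0_le0 (k := k) hD
    omega
  · have := sig0_lt (k := k) hD h0
    by_cases hdi : D - 1 ≤ j0
    · rw [if_pos hdi] at hC
      have hc3 := hnot (j0 - (D - 1))
      omega
    · rw [if_neg hdi] at hC
      omega

lemma count_take_le (hD : 2 ≤ D) (hk : 1 ≤ k) (t j : ℕ) :
    ((avalanche D k).take t).count j ≤ 1 :=
  le_trans ((List.take_sublist t _).count_le j) (count_le_one hD hk j)

lemma mem_take_mono {s : List ℕ} {t t' a : ℕ} (h : t ≤ t') (ha : a ∈ s.take t) :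
    a ∈ s.take t' := by
  have : s.take t = (s.take t').take t := by rw [List.take_take, min_eq_left h]
  exact List.take_subset _ _ (this ▸ ha)

lemma fireable_unfired (hD : 2 ≤ D) (hk : 1 ≤ k) {t j : ℕ} (hf : D ≤ cfgA D k t j) :
    j ∉ (avalanche D k).take t := by
  intro hmem
  have h1 : 1 ≤ ((avalanche D k).take t).count j := List.count_pos_iff.2 hmem
  have h2 : (avalanche D k).count j ≤ 1 := count_le_one hD hk j
  have h3 : ((avalanche D k).take t).count j + ((avalanche D k).drop t).count j
      = (avalanche D k).count j := by
    rw [← List.count_append, List.take_append_drop]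
  have h4 : j ∉ (avalanche D k).drop t := List.count_eq_zero.1 (by omega)
  have h5 := exec_mono (exec_take hD hk t).2 h4
  have h6 := (piN_spec hD k).2 j
  omega

/-- Max of a list of naturals. -/
def rmax (l : List ℕ) : ℕ := l.foldr max 0

lemma le_rmax {l : List ℕ} {a : ℕ} (h : a ∈ l) : a ≤ rmax l := by
  induction l with
  | nil => cases h
  | cons b l ih =>
    rcases List.mem_cons.1 h with rfl | h'
    · exact le_max_left _ _
    · exact le_trans (ih h') (le_max_right _ _)

lemma rmax_mem {l : List ℕ} (h : l ≠ []) : rmax l ∈ l := by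
  induction l with
  | nil => exact absurd rfl h
  | cons b l ih =>
    rcases eq_or_ne l [] with rfl | hne
    · simp [rmax]
    · show max b (rmax l) ∈ b :: l
      rcases max_choice b (rmax l) with he | he
      · rw [he]; exact List.mem_cons_self
      · rw [he]; exact List.mem_cons_of_mem _ (ih hne)

lemma rmax_append_sing (l : List ℕ) (v : ℕ) : rmax (l ++ [v]) = max (rmax l) v := by
  induction l with
  | nil => show max v 0 = max 0 v; omega
  | cons b l ih =>
    show max b (rmax (l ++ [v])) = max (max b (rmax l)) v
    rw [ih]
    omega

lemma head_zero (hD : 2 ≤ D) (hk : 1 ≤ k) (hT : 0 < (avalanche D k).length) :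
    (avalanche D k)[0] = 0 := by
  have := fire_ok hD hk hT
  rw [show cfgA D k 0 = addGrain (piN D (k - 1)) from rfl] at this
  by_contra h
  have h1 : 1 ≤ (avalanche D k)[0] := by omega
  have h2 := sig0_lt (k := k) hD h1
  omega

lemma zero_mem_take (hD : 2 ≤ D) (hk : 1 ≤ k) {t : ℕ} (ht1 : 1 ≤ t)
    (hT : 0 < (avalanche D k).length) : 0 ∈ (avalanche D k).take t := by
  have hl : 0 < ((avalanche D k).take t).length := by
    rw [List.length_take]
    omega
  have he : ((avalanche D k).take t)[0]'hl = (avalanche D k)[0] := List.getElem_take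
  have := List.getElem_mem hl
  rw [he, head_zero hD hk hT] at this
  exact this

lemma peak_struct (hD : 2 ≤ D) (hk : 1 ≤ k) {t v : ℕ} (hv : 1 ≤ v)
    (h1 : v ∉ (avalanche D k).take t) (h2 : v + 1 ∉ (avalanche D k).take t)
    (hf : D ≤ cfgA D k t v) :
    D - 1 ≤ v ∧ v - (D - 1) ∈ (avalanche D k).take t := by
  have hC := cntF hD hk t v
  rw [List.count_eq_zero.2 h1, List.count_eq_zero.2 h2] at hC
  have hlt := sig0_lt (k := k) hD hv
  by_cases hdi : D - 1 ≤ v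
  · rw [if_pos hdi] at hC
    refine ⟨hdi, List.count_pos_iff.1 ?_⟩
    omega
  · rw [if_neg hdi] at hC
    omega

lemma peak_fired (hD : 2 ≤ D) (hk : 1 ≤ k) {t : ℕ} (ht1 : 1 ≤ t)
    (hr : 1 ≤ rmax ((avalanche D k).take t)) :
    D - 1 ≤ rmax ((avalanche D k).take t) ∧
      rmax ((avalanche D k).take t) - (D - 1) ∈ (avalanche D k).take t := by
  have hne : (avalanche D k).take t ≠ [] := by
    intro h
    rw [h] at hr
    simp [rmax] at hr
  have hmem : rmax ((avalanche D k).take t) ∈ (avalanche D k).take t := rmax_mem hne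
  obtain ⟨n, hn, hval⟩ := List.getElem_of_mem hmem
  have hn' := hn
  rw [List.length_take] at hn'
  have hnt : n < t := by omega
  have hnlen : n < (avalanche D k).length := by omega
  have hsval : (avalanche D k)[n] = rmax ((avalanche D k).take t) := by
    rw [← hval]
    exact (List.getElem_take).symm
  have hnot1 : rmax ((avalanche D k).take t) ∉ (avalanche D k).take n := by
    intro hm
    have hc1 : 1 ≤ ((avalanche D k).take n).count (rmax ((avalanche D k).take t)) :=
      List.count_pos_iff.2 hm
    have hsplit : ((avalanche D k).take (n + 1)).count (rmax ((avalanche D k).take t))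
        = ((avalanche D k).take n).count (rmax ((avalanche D k).take t)) + 1 := by
      rw [take_succ_elem hnlen, List.count_append, hsval]
      simp
    have hle := count_take_le hD hk (n + 1) (rmax ((avalanche D k).take t))
    omega
  have hnot2 : rmax ((avalanche D k).take t) + 1 ∉ (avalanche D k).take n := by
    intro hm
    have := le_rmax (mem_take_mono (le_of_lt hnt) hm)
    omega
  have hfire : D ≤ cfgA D k n (rmax ((avalanche D k).take t)) := hsval ▸ fire_ok hD hk hnlen
  obtain ⟨hd1, hd2⟩ := peak_struct hD hk (by omega) hnot1 hnot2 hfire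
  exact ⟨hd1, mem_take_mono (le_of_lt hnt) hd2⟩

lemma greedy_min (hD : 2 ≤ D) (hk : 1 ≤ k) {t : ℕ} (ht : t < (avalanche D k).length)
    {i : ℕ} (hi : D ≤ cfgA D k t i) : (avalanche D k)[t] ≤ i := by
  by_contra hcon
  push_neg at hcon
  have hstable : Stable D (piN D k) := (piN_spec hD k).2
  have hdrop := (exec_take hD hk t).2
  rw [List.drop_eq_getElem_cons ht] at hdrop
  obtain ⟨s'', h'', _⟩ := exec_peel hdrop hstable hi
  have hnew : Exec D (addGrain (piN D (k - 1)))
      ((avalanche D k).take t ++ i :: s'') (piN D k) :=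
    exec_append.2 ⟨_, (exec_take hD hk t).1, exec_cons.2 ⟨hi, h''⟩⟩
  have e0 : avalanche D k
      = (avalanche D k).take t ++ (avalanche D k)[t] :: (avalanche D k).drop (t + 1) := by
    conv_lhs => rw [← List.take_append_drop t (avalanche D k),
      List.drop_eq_getElem_cons ht]
  rcases (avalanche_spec hD hk).2 _ hnew with he | hlex
  · have h2 := List.append_cancel_left (e0.symm.trans he)
    injection h2 with h3 _
    omega
  · have hlex2 : List.Lex (· < ·)
        ((avalanche D k)[t] :: (avalanche D k).drop (t + 1)) (i :: s'') := by
      apply lex_of_append (p := (avalanche D k).take t)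
      rw [← e0]
      exact hlex
    cases hlex2 with
    | rel h' => omega
    | cons h' => omega

lemma invariant (hD : 2 ≤ D) (hk : 1 ≤ k) :
    ∀ t, 1 ≤ t → t ≤ (avalanche D k).length →
      ∀ x, x ∉ (avalanche D k).take t → D ≤ cfgA D k t x →
        x < rmax ((avalanche D k).take t) →
        (∀ i, i < rmax ((avalanche D k).take t) → i ∉ (avalanche D k).take t → i ≤ x) ∧
          rmax ((avalanche D k).take t) - x ≤ D - 2 := by
  intro t ht1
  induction t, ht1 using Nat.le_induction with
  | base =>
    intro hT x hx1 hx2 hx3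
    exfalso
    have h0 : (0 : ℕ) < (avalanche D k).length := by omega
    have e1 : (avalanche D k).take 1 = [(avalanche D k)[0]] := by
      rw [show (1 : ℕ) = 0 + 1 from rfl, take_succ_elem h0]
      simp
    rw [e1, head_zero hD hk h0] at hx3
    simp [rmax] at hx3
  | succ t ht1 ih =>
    intro hsT x hx1 hx2 hx3
    have ht : t < (avalanche D k).length := by omega
    have htle : t ≤ (avalanche D k).length := by omega
    have e_take : (avalanche D k).take (t + 1)
        = (avalanche D k).take t ++ [(avalanche D k)[t]] := take_succ_elem ht
    have e_r : rmax ((avalanche D k).take (t + 1))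
        = max (rmax ((avalanche D k).take t)) ((avalanche D k)[t]) := by
      rw [e_take, rmax_append_sing]
    have hvf : D ≤ cfgA D k t ((avalanche D k)[t]) := fire_ok hD hk ht
    have hvnm : (avalanche D k)[t] ∉ (avalanche D k).take t := fireable_unfired hD hk hvf
    have hxmem : x ∉ (avalanche D k).take t := fun m => hx1 (mem_take_mono (by omega) m)
    have hvmem1 : (avalanche D k)[t] ∈ (avalanche D k).take (t + 1) := by
      rw [e_take]
      exact List.mem_append_right _ (List.mem_singleton.2 rfl)
    have hxnev : x ≠ (avalanche D k)[t] := fun e => hx1 (e ▸ hvmem1)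
    rw [cfgA_succ hD hk ht] at hx2
    have hTpos : 0 < (avalanche D k).length := by omega
    rcases Nat.lt_trichotomy ((avalanche D k)[t]) (rmax ((avalanche D k).take t)) with
      hvr | hvr | hvr
    · -- v < r : interior firing
      have hrr : rmax ((avalanche D k).take (t + 1)) = rmax ((avalanche D k).take t) := by
        rw [e_r]; omega
      obtain ⟨hmaxv, hgapv⟩ := ih htle ((avalanche D k)[t]) hvnm hvf hvr
      have hv1 : 1 ≤ (avalanche D k)[t] := by
        rcases Nat.eq_zero_or_pos ((avalanche D k)[t]) with h0 | h0
        · exact absurd (h0 ▸ zero_mem_take hD hk ht1 hTpos) hvnm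
        · exact h0
      by_cases hc1 : x + 1 = (avalanche D k)[t]
      · constructor
        · intro i hi1 hi2
          rw [hrr] at hi1
          have hi3 : i ∉ (avalanche D k).take t := fun m => hi2 (mem_take_mono (by omega) m)
          have hi4 := hmaxv i hi1 hi3
          have hi5 : i ≠ (avalanche D k)[t] := fun e => hi2 (e ▸ hvmem1)
          omega
        · rw [hrr]
          obtain ⟨hpk1, hpk2⟩ := peak_fired hD hk ht1
            (show 1 ≤ rmax ((avalanche D k).take t) by omega)
          have hxne : x ≠ rmax ((avalanche D k).take t) - (D - 1) := fun e => hxmem (e ▸ hpk2)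
          omega
      · by_cases hc2 : x = (avalanche D k)[t] + D - 1
        · exfalso
          rw [hrr] at hx3
          omega
        · have hval : fireAt D (cfgA D k t) ((avalanche D k)[t]) x = cfgA D k t x := by
            unfold fireAt
            rw [if_neg hxnev, if_neg hc1, if_neg hc2]
          rw [hval] at hx2
          rw [hrr] at hx3
          obtain ⟨hmaxx, _⟩ := ih htle x hxmem hx2 hx3
          have h1 := hmaxv x hx3 hxmem
          have h2 := hmaxx ((avalanche D k)[t]) hvr hvnm
          omega
    · -- v = r : impossible, r already fired
      exfalso
      have hne : (avalanche D k).take t ≠ [] := by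
        intro h
        have h2 : ((avalanche D k).take t).length = 0 := by rw [h]; rfl
        rw [List.length_take] at h2
        omega
      exact hvnm (hvr ▸ rmax_mem hne)
    · -- r < v : new peak
      have hrr : rmax ((avalanche D k).take (t + 1)) = (avalanche D k)[t] := by
        rw [e_r]; omega
      rw [hrr] at hx3 ⊢
      by_cases hc1 : x + 1 = (avalanche D k)[t]
      · refine ⟨fun i hi1 _ => by omega, ?_⟩
        have hnm2 : (avalanche D k)[t] + 1 ∉ (avalanche D k).take t := by
          intro hm
          have := le_rmax hm
          omega
        obtain ⟨hps1, hps2⟩ := peak_struct hD hk (by omega) hvnm hnm2 hvf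
        have hxne : x ≠ (avalanche D k)[t] - (D - 1) := fun e => hxmem (e ▸ hps2)
        omega
      · by_cases hc2 : x = (avalanche D k)[t] + D - 1
        · exfalso
          omega
        · have hval : fireAt D (cfgA D k t) ((avalanche D k)[t]) x = cfgA D k t x := by
            unfold fireAt
            rw [if_neg hxnev, if_neg hc1, if_neg hc2]
          rw [hval] at hx2
          have := greedy_min hD hk ht hx2
          omega

end Main

/-- Pseudo-locality of avalanches. Let `s^k` be the `k`-th avalanche, `t < T`
a (1-based) time, `r_t` the maximum of the first `t` fired columns and `v` the
column fired at time `t+1` (0-based index `t`). Then: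
(i) if `v < r_t` then `v` is the largest column `< r_t` not yet fired, and
`r_t − v < D−1`; (ii) if `v > r_t` then `v ≤ r_t + D−1`. -/
theorem avalanche_pseudo_local (D k : ℕ) (hD : 2 ≤ D) (hk : 1 ≤ k) (t : ℕ)
    (ht1 : 1 ≤ t) (ht : t < (avalanche D k).length) :
    (((avalanche D k).getD t 0 < ((avalanche D k).take t).foldr max 0 →
      ((avalanche D k).getD t 0 ∉ (avalanche D k).take t ∧
        (∀ i, i < ((avalanche D k).take t).foldr max 0 →
          i ∉ (avalanche D k).take t → i ≤ (avalanche D k).getD t 0) ∧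
        ((avalanche D k).take t).foldr max 0 - (avalanche D k).getD t 0
          < D - 1)) ∧
    (((avalanche D k).take t).foldr max 0 < (avalanche D k).getD t 0 →
      (avalanche D k).getD t 0 ≤ ((avalanche D k).take t).foldr max 0
        + (D - 1))) := by
  have hgd : (avalanche D k).getD t 0 = (avalanche D k)[t] := List.getD_eq_getElem _ _ ht
  have hrm : ((avalanche D k).take t).foldr max 0 = rmax ((avalanche D k).take t) := rfl
  rw [hgd, hrm]
  constructor
  · intro hlt
    have hvf := fire_ok hD hk ht
    have hvnm := fireable_unfired hD hk hvf
    obtain ⟨h1, h2⟩ := invariant hD hk t ht1 (le_of_lt ht) _ hvnm hvf hlt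
    exact ⟨hvnm, h1, by omega⟩
  · intro hgt
    have h1 : (avalanche D k)[t] ∉ (avalanche D k).take t := fun m => by
      have := le_rmax m
      omega
    have h2 : (avalanche D k)[t] + 1 ∉ (avalanche D k).take t := fun m => by
      have := le_rmax m
      omega
    have hv1 : 1 ≤ (avalanche D k)[t] := by omega
    obtain ⟨hp1, hp2⟩ := peak_struct hD hk hv1 h1 h2 (fire_ok hD hk ht)
    have := le_rmax hp2
    omega
end

section
/- Let L denote the language {ab·u : u a word over {a,b}} ∪ {ε, a}. Then: (i) for every word u over {a,b}, t'(u) ∈ L; (ii) for every v ∈ L, t(v) ∈ L; (iii) for every word u over {a,b}, t(t(u)) ∈ L. -/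
def inL (w : List Bool) : Prop := (∃ u, w = false :: true :: u) ∨ w = [] ∨ w = [false]
def inB (w : List Bool) : Prop := (∃ u, w = true :: false :: u) ∨ w = [] ∨ w = [true]

lemma key : ∀ u : List Bool,
    inL (runT .s21 u) ∧ inB (runT .s12 u) ∧ inB (runT .s22 u) ∧
    (inL (runT .s11 u) ∨ inB (runT .s11 u)) ∧
    (inL (runT .s00 u) ∨ inB (runT .s00 u)) ∧
    (inL (runT .s10 u) ∨ inB (runT .s10 u)) ∧
    (inL (runT .s20 u) ∨ inB (runT .s20 u)) := by
  intro u
  induction u with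
  | nil => simp [runT, inL, inB]
  | cons x u ih =>
    obtain ⟨h21, h12, h22, h11, h00, h10, h20⟩ := ih
    cases x <;>
      simp only [runT, tStep, List.cons_append, List.nil_append]
    · refine ⟨?_, h22, Or.inl ⟨_, rfl⟩, Or.inl h21, h10, h20, h11⟩
      rcases h12 with ⟨y, hy⟩ | hy | hy <;> rw [hy]
      · exact Or.inl ⟨false :: y, rfl⟩
      · exact Or.inr (Or.inr rfl)
      · exact Or.inl ⟨[], rfl⟩
    · refine ⟨Or.inl ⟨_, rfl⟩, ?_, Or.inl ⟨_, rfl⟩, Or.inr h22, h11, Or.inl h21, Or.inr h12⟩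
      rcases h21 with ⟨y, hy⟩ | hy | hy <;> rw [hy]
      · exact Or.inl ⟨true :: y, rfl⟩
      · exact Or.inr (Or.inr rfl)
      · exact Or.inl ⟨[], rfl⟩

lemma inL_mem {w : List Bool} (h : inL w) : w ∈ LangL := by
  rcases h with ⟨y, hy⟩ | hy | hy
  · exact Or.inl ⟨y, hy⟩
  · exact Or.inr (Or.inl hy)
  · exact Or.inr (Or.inr hy)

/-- (i) `t'(u) ∈ L` for every word `u`; (ii) `t(v) ∈ L` for every `v ∈ L`;
(iii) `t(t(u)) ∈ L` for every word `u`. -/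
theorem transducer_language_L :
    (∀ u : List Bool, tT' u ∈ LangL) ∧
    (∀ v ∈ LangL, tT v ∈ LangL) ∧
    (∀ u : List Bool, tT (tT u) ∈ LangL) := by
  have hi : ∀ u : List Bool, tT' u ∈ LangL := fun u => inL_mem (key u).1
  have hii : ∀ v ∈ LangL, tT v ∈ LangL := by
    intro v hv
    rcases hv with ⟨y, hy⟩ | hy | hy
    · subst hy
      show runT .s00 (false :: true :: y) ∈ LangL
      simp only [runT, tStep, List.nil_append]
      exact inL_mem (key y).1
    · subst hy; exact Or.inr (Or.inl rfl)
    · simp only [Set.mem_singleton_iff] at hy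
      subst hy
      show runT .s00 [false] ∈ LangL
      simp only [runT, tStep, List.nil_append]
      exact Or.inr (Or.inl rfl)
  refine ⟨hi, hii, ?_⟩
  intro u
  rcases (key u).2.2.2.2.1 with hL | hB
  · exact hii _ (inL_mem hL)
  · rcases hB with ⟨y, hy⟩ | hy | hy <;>
        (show runT TSt.s00 (runT TSt.s00 u) ∈ LangL; rw [hy])
    · show runT .s00 (true :: false :: y) ∈ LangL
      simp only [runT, tStep, List.nil_append]
      exact inL_mem (key y).1
    · exact Or.inr (Or.inl rfl)
    · show runT .s00 [true] ∈ LangL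
      simp only [runT, tStep, List.nil_append]
      exact Or.inr (Or.inl rfl)
end

section
/- For every word v in the language L = {ab·u : u a word over {a,b}} ∪ {ε, a}, the height satisfies h(t(v)) ≤ h(v)/4 + 1. -/
/-! ### Auxiliary machinery -/

/-- Signed letter count. -/
def dcnt (w : List Bool) : ℤ := (w.count false : ℤ) - (w.count true : ℤ)

lemma dcnt_append (w₁ w₂ : List Bool) : dcnt (w₁ ++ w₂) = dcnt w₁ + dcnt w₂ := by
  simp [dcnt, List.count_append]; ring

lemma dcnt_cons (x : Bool) (u : List Bool) :
    dcnt (x :: u) = (if x then (-1 : ℤ) else 1) + dcnt u := by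
  cases x <;> simp [dcnt, List.count_cons] <;> ring

/-- State potential on the SCC {11,12,21,22}. -/
def phi : TSt → ℤ
  | .s21 => 0
  | .s11 => -1
  | .s22 => -2
  | .s12 => -3
  | _ => 0

/-- Membership in the SCC. -/
def good (q : TSt) : Prop :=
  q = .s11 ∨ q = .s12 ∨ q = .s21 ∨ q = .s22

lemma step_good : ∀ q, good q → ∀ x : Bool, good (tStep q x).1 ∧
    (if x then (-1 : ℤ) else 1) - 4 * dcnt (tStep q x).2 = phi (tStep q x).1 - phi q := by
  intro q hq x
  rcases hq with h | h | h | h <;> subst h <;> cases x <;>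
    simp [tStep, good, phi, dcnt, List.count_cons]

lemma key_s10 : ∀ (u : List Bool) (q : TSt), good q →
    ∃ q', good q' ∧ dcnt u - 4 * dcnt (runT q u) = phi q' - phi q := by
  intro u
  induction u with
  | nil => intro q hq; exact ⟨q, hq, by simp [runT, dcnt]⟩
  | cons x u ih =>
    intro q hq
    obtain ⟨hg, hs⟩ := step_good q hq x
    obtain ⟨q', hq', heq⟩ := ih (tStep q x).1 hg
    refine ⟨q', hq', ?_⟩
    have h2 : runT q (x :: u) = (tStep q x).2 ++ runT (tStep q x).1 u := rfl
    rw [dcnt_cons, h2, dcnt_append]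
    linarith

lemma hgt_eq (w : List Bool) : hgt w = (dcnt w).natAbs := rfl

/-- For every `v` in the language `L`, `h(t(v)) ≤ h(v)/4 + 1`. -/
theorem transducer_height_decrease :
    ∀ v ∈ LangL, (hgt (tT v) : ℝ) ≤ (hgt v : ℝ) / 4 + 1 := by
  intro v hv
  rcases hv with ⟨u, rfl⟩ | hv
  · -- v = ab·u
    have hrun : tT (false :: true :: u) = runT .s21 u := by
      simp [tT, runT, tStep]
    have hdv : dcnt (false :: true :: u) = dcnt u := by
      simp [dcnt, List.count_cons]
    obtain ⟨q', hq', heq⟩ := key_s10 u .s21 (by right; right; left; rfl)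
    have hphi : -3 ≤ phi q' ∧ phi q' ≤ 0 := by
      rcases hq' with h | h | h | h <;> subst h <;> simp [phi]
    -- |4 * dcnt (runT .s21 u)| ≤ |dcnt u| + 3
    have habs : 4 * |dcnt (runT .s21 u)| ≤ |dcnt u| + 3 := by
      have h1 : 4 * dcnt (runT .s21 u) = dcnt u - phi q' := by
        have h0 : phi TSt.s21 = 0 := rfl
        linarith
      have : |4 * dcnt (runT .s21 u)| ≤ |dcnt u| + |phi q'| := by
        rw [h1]; exact abs_sub _ _
      have h3 : |phi q'| ≤ 3 := by
        rw [abs_le]; constructor <;> linarith [hphi.1, hphi.2]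
      calc 4 * |dcnt (runT .s21 u)| = |4 * dcnt (runT .s21 u)| := by
            rw [abs_mul]; norm_num
        _ ≤ |dcnt u| + |phi q'| := this
        _ ≤ |dcnt u| + 3 := by linarith
    -- convert to ℝ
    rw [hrun, hgt_eq, hgt_eq, hdv]
    have h4 : ((dcnt (runT .s21 u)).natAbs : ℝ) = |((dcnt (runT .s21 u) : ℤ) : ℝ)| := by
      rw [Nat.cast_natAbs, Int.cast_abs]
    have h5 : ((dcnt u).natAbs : ℝ) = |((dcnt u : ℤ) : ℝ)| := by
      rw [Nat.cast_natAbs, Int.cast_abs]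
    rw [h4, h5]
    have habsR : 4 * |((dcnt (runT .s21 u) : ℤ) : ℝ)| ≤ |((dcnt u : ℤ) : ℝ)| + 3 := by
      exact_mod_cast habs
    linarith
  · rcases hv with rfl | rfl
    · simp [tT, runT, hgt]
    · have : tT [false] = [] := rfl
      rw [this]
      have : hgt [] = 0 := rfl
      rw [this]
      have : (0:ℝ) ≤ (hgt [false] : ℝ) / 4 := by positivity
      simp
      linarith
end

section
/- For every word w over {a,b} such that every prefix w' of w satisfies | |w'|_a − |w'|_b | ≤ 1 (i.e., g(w) ≤ 1), the word t(w) is a prefix of the infinite periodic word (ab)^ω = ababab⋯. -/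
def AltP (p : ℕ) (w : List Bool) : Prop :=
  ∀ i (hi : i < w.length), w.get ⟨i, hi⟩ = decide ((i + p) % 2 = 1)

lemma altP_nil (p : ℕ) : AltP p [] := by intro i hi; simp at hi

lemma altP_cons {p : ℕ} {x : Bool} {w : List Bool}
    (hx : x = decide (p % 2 = 1)) (hw : AltP (p + 1) w) : AltP p (x :: w) := by
  intro i hi
  cases i with
  | zero => simpa using hx
  | succ n =>
    have hn : n < w.length := by simpa using Nat.lt_of_succ_lt_succ hi
    have := hw n hn
    have hmod : (n + 1 + p) % 2 = (n + (p + 1)) % 2 := by omega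
    simpa [List.get, hmod] using this

lemma altP_two {p : ℕ} {w : List Bool} (hw : AltP p w) : AltP (p + 2) w := by
  intro i hi
  have hmod : (i + (p + 2)) % 2 = (i + p) % 2 := by omega
  rw [hmod]; exact hw i hi

def Ok (q : TSt) (d : ℤ) : Prop :=
  (q = .s00 ∧ d = 0) ∨ (q = .s10 ∧ d = 1) ∨ (q = .s11 ∧ d = -1) ∨
  (q = .s21 ∧ d = 0) ∨ (q = .s12 ∧ d = 1)

def par : TSt → ℕ := fun q => if q = .s12 then 1 else 0

lemma main_lemma : ∀ (u : List Bool) (q : TSt) (d : ℤ), Ok q d →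
    (∀ u', u' <+: u → ((d + u'.count false - u'.count true : ℤ)).natAbs ≤ 1) →
    AltP (par q) (runT q u) := by
  intro u
  induction u with
  | nil => intro q d _ _; exact altP_nil _
  | cons x v ih =>
    intro q d hok h
    have hstep : ∀ (q' : TSt) (d' : ℤ), Ok q' d' → (x = false → d' = d + 1) → (x = true → d' = d - 1) →
        AltP (par q') (runT q' v) := by
      intro q' d' hok' hf ht
      refine ih q' d' hok' ?_
      intro u' hu'
      have := h (x :: u') (List.cons_prefix_cons.mpr ⟨rfl, hu'⟩)
      cases x with
      | false => have hd := hf rfl; simp [List.count_cons] at this; omega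
      | true => have hd := ht rfl; simp [List.count_cons] at this; omega
    have hone := h [x] ⟨v, rfl⟩
    rcases hok with ⟨hq, hd⟩ | ⟨hq, hd⟩ | ⟨hq, hd⟩ | ⟨hq, hd⟩ | ⟨hq, hd⟩ <;> subst hq <;> subst hd <;>
      cases x
    · -- s00, a → s10
      show AltP (par .s00) (runT .s00 (false :: v))
      simpa [runT, tStep, par] using hstep .s10 1 (by simp [Ok]) (by intro; norm_num) (by simp)
    · -- s00, b → s11
      simpa [runT, tStep, par] using hstep .s11 (-1) (by simp [Ok]) (by simp) (by intro; norm_num)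
    · -- s10, a : forbidden
      exfalso; simp [List.count_cons] at hone
    · -- s10, b → s21
      simpa [runT, tStep, par] using hstep .s21 0 (by simp [Ok]) (by simp) (by intro; norm_num)
    · -- s11, a → s21
      simpa [runT, tStep, par] using hstep .s21 0 (by simp [Ok]) (by intro; norm_num) (by simp)
    · -- s11, b : forbidden
      exfalso; simp [List.count_cons] at hone
    · -- s21, a → s12, output [false]
      have hrest := hstep .s12 1 (by simp [Ok]) (by intro; norm_num) (by simp)
      show AltP (par .s21) (runT .s21 (false :: v))
      simp only [runT, tStep, par, List.cons_append, List.nil_append]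
      exact altP_cons (by decide) (by simpa [par] using hrest)
    · -- s21, b → s11, output [false, true]
      have hrest := hstep .s11 (-1) (by simp [Ok]) (by simp) (by intro; norm_num)
      show AltP (par .s21) (runT .s21 (true :: v))
      simp only [runT, tStep, par, List.cons_append, List.nil_append]
      refine altP_cons (by decide) (altP_cons (by decide) ?_)
      exact altP_two (by simpa [par] using hrest)
    · -- s12, a : forbidden
      exfalso; simp [List.count_cons] at hone
    · -- s12, b → s21, output [true]
      have hrest := hstep .s21 0 (by simp [Ok]) (by simp) (by intro; norm_num)
      show AltP (par .s12) (runT .s12 (true :: v))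
      simp only [runT, tStep, par, List.cons_append, List.nil_append]
      exact altP_cons (by decide) (altP_two (by simpa [par] using hrest))

/-- If every prefix `w'` of `w` satisfies `| |w'|_a − |w'|_b | ≤ 1` (i.e.
`g(w) ≤ 1`), then `t(w)` is a prefix of `(ab)^ω`. -/
theorem transducer_low_height_gives_prefix_ab (w : List Bool)
    (h : ∀ w', w' <+: w → hgt w' ≤ 1) :
    PrefixAB (tT w) := by
  have := main_lemma w .s00 0 (Or.inl ⟨rfl, rfl⟩) (by
    intro u' hu'
    have := h u' hu'
    simp only [hgt] at this
    omega)
  simpa [par, tT, PrefixAB, AltP] using this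
end

section
/- Diamond property: if a configuration σ admits transitions σ →_i σ' and σ →_j σ'' on two distinct columns i ≠ j, then there exists a configuration σ''' such that σ' →_j σ''' and σ'' →_i σ'''. -/
open scoped Classical

/-- Diamond property: transitions on two distinct columns commute. -/
theorem diamond_property (D : ℕ) (hD : 2 ≤ D) (σ σ' σ'' : Config)
    (hfin : (Function.support σ).Finite) (i j : ℕ) (hij : i ≠ j)
    (h1 : Step D σ i σ') (h2 : Step D σ j σ'') :
    ∃ σ''', Step D σ' j σ''' ∧ Step D σ'' i σ''' := by
  obtain ⟨hi, rfl⟩ := h1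
  obtain ⟨hj, rfl⟩ := h2
  refine ⟨fireAt D (fireAt D σ i) j, ⟨?_, rfl⟩, ?_, ?_⟩
  · simp only [fireAt]; split_ifs <;> omega
  · simp only [fireAt]; split_ifs <;> omega
  · funext k
    simp only [fireAt]
    by_cases hk1 : k = i <;> by_cases hk2 : k = j <;>
      [skip; subst hk1; subst hk2; skip] <;> split_ifs <;> omega
end

section
/- For every configuration σ there exists a unique stable configuration π(σ) with σ →* π(σ); moreover, for every configuration σ' with σ →* σ', the unique stable configuration reachable from σ' equals π(σ). -/
open scoped Classical

/-! ### Auxiliary machinery for the fixed-point theorem -/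

lemma fire_pointwise' (D : ℕ) (σ : Config) (i : ℕ) (hD : 2 ≤ D) (hi : D ≤ σ i) (k : ℕ) :
    fireAt D σ i k + (if k = i then D else 0)
      = σ k + (if k = i + D - 1 then 1 else 0) + (if k + 1 = i then D - 1 else 0) := by
  simp only [fireAt]; split_ifs <;> subst_vars <;> omega

lemma fire_ge' (D : ℕ) (σ : Config) (i j : ℕ) (hj : j ≠ i) : σ j ≤ fireAt D σ i j := by
  simp only [fireAt]; split_ifs <;> omega

lemma fire_comm' (D : ℕ) (σ : Config) (i j : ℕ) (hD : 2 ≤ D) (hi : D ≤ σ i) (hj : D ≤ σ j)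
    (hij : i ≠ j) : fireAt D (fireAt D σ i) j = fireAt D (fireAt D σ j) i := by
  funext k
  simp only [fireAt]
  split_ifs <;> subst_vars <;> omega

/-- Height of column `j`, computed as the sum of the differences up to `n`. -/
def Hgt (σ : Config) (n j : ℕ) : ℕ := ∑ k ∈ Finset.Ico j n, σ k

/-- The quadratic potential. -/
def Meas (σ : Config) (n : ℕ) : ℕ := ∑ j ∈ Finset.range n, (Hgt σ n j)^2

/-- `σ` vanishes from `n` on. -/
def Bdd (σ : Config) (n : ℕ) : Prop := ∀ j, n ≤ j → σ j = 0

lemma Hgt_fire (D : ℕ) (σ : Config) (i n : ℕ) (hD : 2 ≤ D) (hi : D ≤ σ i)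
    (hn : i + D ≤ n) (j : ℕ) :
    Hgt (fireAt D σ i) n j + (if j ≤ i then D else 0)
      = Hgt σ n j + (if j ≤ i + D - 1 then 1 else 0) + (if j + 1 ≤ i then D - 1 else 0) := by
  have h1 : ∑ k ∈ Finset.Ico j n, (fireAt D σ i k + (if k = i then D else 0))
      = ∑ k ∈ Finset.Ico j n,
        (σ k + (if k = i + D - 1 then 1 else 0) + (if k + 1 = i then D - 1 else 0)) :=
    Finset.sum_congr rfl fun k _ => fire_pointwise' D σ i hD hi k
  rw [Finset.sum_add_distrib] at h1
  rw [Finset.sum_add_distrib, Finset.sum_add_distrib] at h1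
  rw [Finset.sum_ite_eq' (Finset.Ico j n) i (fun _ => D)] at h1
  rw [Finset.sum_ite_eq' (Finset.Ico j n) (i + D - 1) (fun _ => 1)] at h1
  have h2 : ∑ k ∈ Finset.Ico j n, (if k + 1 = i then D - 1 else 0)
      = if j + 1 ≤ i then D - 1 else 0 := by
    rcases i with _ | m
    · simp
    · have : ∀ k ∈ Finset.Ico j n, (if k + 1 = m + 1 then D - 1 else 0)
          = (if k = m then D - 1 else 0) := fun k _ => if_congr (by omega) rfl rfl
      rw [Finset.sum_congr rfl this, Finset.sum_ite_eq' (Finset.Ico j n) m (fun _ => D - 1)]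
      have : m ∈ Finset.Ico j n ↔ j + 1 ≤ m + 1 := by
        rw [Finset.mem_Ico]; omega
      split_ifs with a b b <;> simp_all
  rw [h2] at h1
  have e1 : (if i ∈ Finset.Ico j n then D else 0) = (if j ≤ i then D else 0) :=
    if_congr (by rw [Finset.mem_Ico]; omega) rfl rfl
  have e2 : (if i + D - 1 ∈ Finset.Ico j n then 1 else 0)
      = (if j ≤ i + D - 1 then (1:ℕ) else 0) :=
    if_congr (by rw [Finset.mem_Ico]; omega) rfl rfl
  rw [e1, e2] at h1
  exact h1

lemma Hgt_rec (σ : Config) (n j : ℕ) (h : j < n) : Hgt σ n j = σ j + Hgt σ n (j+1) := by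
  unfold Hgt; rw [Finset.sum_eq_sum_Ico_succ_bot h]

lemma Hgt_anti (σ : Config) (n : ℕ) {j j' : ℕ} (h : j ≤ j') : Hgt σ n j' ≤ Hgt σ n j :=
  Finset.sum_le_sum_of_subset (Finset.Ico_subset_Ico h le_rfl)

lemma Meas_fire_lt (D : ℕ) (σ : Config) (i n : ℕ) (hD : 2 ≤ D) (hi : D ≤ σ i)
    (hn : i + D ≤ n) : Meas (fireAt D σ i) n < Meas σ n := by
  have hA : ∀ j, j < i → Hgt (fireAt D σ i) n j = Hgt σ n j := by
    intro j hj
    have H := Hgt_fire D σ i n hD hi hn j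
    split_ifs at H <;> omega
  have hB : Hgt (fireAt D σ i) n i + D = Hgt σ n i + 1 := by
    have H := Hgt_fire D σ i n hD hi hn i
    split_ifs at H <;> omega
  have hC : ∀ j, i < j → j < i + D → Hgt (fireAt D σ i) n j = Hgt σ n j + 1 := by
    intro j h1 h2
    have H := Hgt_fire D σ i n hD hi hn j
    split_ifs at H <;> omega
  have hE : ∀ j, i + D ≤ j → Hgt (fireAt D σ i) n j = Hgt σ n j := by
    intro j hj
    have H := Hgt_fire D σ i n hD hi hn j
    split_ifs at H <;> omega
  have hDi : D ≤ Hgt σ n i := by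
    have := Hgt_rec σ n i (by omega); omega
  have hCb : ∀ j, i < j → Hgt σ n j + D ≤ Hgt σ n i := by
    intro j hj
    have h1 : Hgt σ n j ≤ Hgt σ n (i+1) := Hgt_anti σ n (by omega)
    have h2 := Hgt_rec σ n i (by omega)
    omega
  have split : ∀ f : ℕ → ℕ, ∑ j ∈ Finset.range n, f j
      = (∑ j ∈ Finset.Ico 0 i, f j)
        + ((f i + ∑ j ∈ Finset.Ico (i+1) (i+D), f j) + ∑ j ∈ Finset.Ico (i+D) n, f j) := by
    intro f
    rw [Finset.range_eq_Ico,
      ← Finset.sum_Ico_consecutive f (Nat.zero_le i) (show i ≤ n by omega),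
      ← Finset.sum_Ico_consecutive f (show i ≤ i + D by omega) hn,
      Finset.sum_eq_sum_Ico_succ_bot (show i < i + D by omega) f]
  unfold Meas
  rw [split (fun j => (Hgt (fireAt D σ i) n j)^2), split (fun j => (Hgt σ n j)^2)]
  have eA : ∑ j ∈ Finset.Ico 0 i, (Hgt (fireAt D σ i) n j)^2
      = ∑ j ∈ Finset.Ico 0 i, (Hgt σ n j)^2 :=
    Finset.sum_congr rfl fun j hj => by
      rw [hA j (Finset.mem_Ico.mp hj).2]
  have eE : ∑ j ∈ Finset.Ico (i+D) n, (Hgt (fireAt D σ i) n j)^2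
      = ∑ j ∈ Finset.Ico (i+D) n, (Hgt σ n j)^2 :=
    Finset.sum_congr rfl fun j hj => by
      rw [hE j (Finset.mem_Ico.mp hj).1]
  rw [eA, eE]
  have eC : ∑ j ∈ Finset.Ico (i+1) (i+D), (Hgt (fireAt D σ i) n j)^2
      ≤ (∑ j ∈ Finset.Ico (i+1) (i+D), (Hgt σ n j)^2)
        + (D-1) * (2*(Hgt σ n i - D) + 1) := by
    have step : ∀ j ∈ Finset.Ico (i+1) (i+D),
        (Hgt (fireAt D σ i) n j)^2 ≤ (Hgt σ n j)^2 + (2*(Hgt σ n i - D) + 1) := by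
      intro j hj
      rw [Finset.mem_Ico] at hj
      rw [hC j hj.1 hj.2]
      have hb := hCb j hj.1
      have e : (Hgt σ n j + 1)^2 = (Hgt σ n j)^2 + 2 * Hgt σ n j + 1 := by ring
      omega
    calc ∑ j ∈ Finset.Ico (i+1) (i+D), (Hgt (fireAt D σ i) n j)^2
        ≤ ∑ j ∈ Finset.Ico (i+1) (i+D), ((Hgt σ n j)^2 + (2*(Hgt σ n i - D) + 1)) :=
          Finset.sum_le_sum step
      _ = (∑ j ∈ Finset.Ico (i+1) (i+D), (Hgt σ n j)^2)
            + (D-1) * (2*(Hgt σ n i - D) + 1) := by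
          rw [Finset.sum_add_distrib, Finset.sum_const, Nat.card_Ico, smul_eq_mul]
          congr 2
          omega
  have key : (Hgt (fireAt D σ i) n i)^2 + (D-1) * (2*(Hgt σ n i - D) + 1)
      < (Hgt σ n i)^2 := by
    obtain ⟨a, ha⟩ : ∃ a, Hgt σ n i = D + a := ⟨Hgt σ n i - D, by omega⟩
    have hB' : Hgt (fireAt D σ i) n i = a + 1 := by omega
    rw [hB', ha]
    have h2 : D + a - D = a := by omega
    rw [h2]
    obtain ⟨d, rfl⟩ : ∃ d, D = d + 2 := ⟨D - 2, by omega⟩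
    have h3 : d + 2 - 1 = d + 1 := rfl
    rw [h3]
    nlinarith
  linarith [eC, key]

lemma Hgt_ext (σ : Config) (n m j : ℕ) (hb : Bdd σ n) (hnm : n ≤ m) :
    Hgt σ m j = Hgt σ n j := by
  unfold Hgt
  rcases le_or_gt j n with h | h
  · rw [← Finset.sum_Ico_consecutive σ h hnm]
    have h0 : ∑ k ∈ Finset.Ico n m, σ k = 0 :=
      Finset.sum_eq_zero fun k hk => hb k (Finset.mem_Ico.mp hk).1
    omega
  · rw [Finset.Ico_eq_empty (by omega : ¬ j < n), Finset.sum_empty]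
    exact Finset.sum_eq_zero fun k hk => hb k (by
      have := (Finset.mem_Ico.mp hk).1; omega)

lemma Meas_ext (σ : Config) (n m : ℕ) (hb : Bdd σ n) (hnm : n ≤ m) :
    Meas σ m = Meas σ n := by
  unfold Meas
  have e : ∀ j ∈ Finset.range m, (Hgt σ m j)^2 = (Hgt σ n j)^2 := fun j _ => by
    rw [Hgt_ext σ n m j hb hnm]
  rw [Finset.sum_congr rfl e, Finset.range_eq_Ico,
    ← Finset.sum_Ico_consecutive _ (Nat.zero_le n) hnm]
  have h0 : ∑ j ∈ Finset.Ico n m, (Hgt σ n j)^2 = 0 :=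
    Finset.sum_eq_zero fun j hj => by
      have hj' := (Finset.mem_Ico.mp hj).1
      have : Hgt σ n j = 0 := by
        unfold Hgt; rw [Finset.Ico_eq_empty (by omega : ¬ j < n), Finset.sum_empty]
      simp [this]
  rw [h0, add_zero, Finset.range_eq_Ico]

lemma Bdd_fire (D : ℕ) (σ : Config) (i n : ℕ) (hD : 2 ≤ D) (hi : D ≤ σ i)
    (hb : Bdd σ n) : Bdd (fireAt D σ i) (n + D) := by
  have hi' : i < n := by
    by_contra h
    push_neg at h
    have := hb i h
    omega
  intro j hj
  simp only [fireAt]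
  split_ifs with h1 h2 h3
  · omega
  · omega
  · omega
  · exact hb j (by omega)

lemma reach_stable (D : ℕ) (hD : 2 ≤ D) :
    ∀ K σ n, Bdd σ n → Meas σ n = K → ∃ μ, Reaches D σ μ ∧ Stable D μ := by
  intro K
  induction K using Nat.strong_induction_on with
  | _ K ih =>
    intro σ n hb hm
    by_cases hs : Stable D σ
    · exact ⟨σ, Relation.ReflTransGen.refl, hs⟩
    · have : ∃ i, D ≤ σ i := by
        unfold Stable at hs
        push_neg at hs
        exact hs
      obtain ⟨i, hi⟩ := this
      have hi' : i < n := by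
        by_contra h
        push_neg at h
        have := hb i h
        omega
      have hb' : Bdd (fireAt D σ i) (n + D) := Bdd_fire D σ i n hD hi hb
      have hlt : Meas (fireAt D σ i) (n + D) < Meas σ (n + D) :=
        Meas_fire_lt D σ i (n + D) hD hi (by omega)
      have heq : Meas σ (n + D) = Meas σ n := Meas_ext σ n (n + D) hb (by omega)
      obtain ⟨μ, hr, hst⟩ := ih (Meas (fireAt D σ i) (n + D)) (by omega)
        (fireAt D σ i) (n + D) hb' rfl
      exact ⟨μ, Relation.ReflTransGen.head ⟨i, hi, rfl⟩ hr, hst⟩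

lemma stepRel_diamond (D : ℕ) (hD : 2 ≤ D) : ∀ σ τ ρ : Config,
    StepRel D σ τ → StepRel D σ ρ →
    ∃ χ, Relation.ReflGen (StepRel D) τ χ ∧ Relation.ReflTransGen (StepRel D) ρ χ := by
  rintro σ τ ρ ⟨i, hi, rfl⟩ ⟨j, hj, rfl⟩
  rcases eq_or_ne i j with rfl | hij
  · exact ⟨fireAt D σ i, Relation.ReflGen.refl, Relation.ReflTransGen.refl⟩
  · refine ⟨fireAt D (fireAt D σ i) j,
      Relation.ReflGen.single ⟨j, ?_, rfl⟩,
      Relation.ReflTransGen.single ⟨i, ?_, ?_⟩⟩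
    · exact le_trans hj (fire_ge' D σ i j (Ne.symm hij))
    · exact le_trans hi (fire_ge' D σ j i hij)
    · exact fire_comm' D σ i j hD hi hj hij

lemma stable_reach_eq (D : ℕ) (σ μ : Config) (hst : Stable D σ) (h : Reaches D σ μ) :
    μ = σ := by
  rcases h.cases_head with rfl | ⟨c, ⟨i, hi, _⟩, _⟩
  · rfl
  · have := hst i
    omega

lemma unique_aux (D : ℕ) (hD : 2 ≤ D) (σ μ μ' : Config)
    (h1 : Reaches D σ μ) (h2 : Stable D μ) (h3 : Reaches D σ μ') (h4 : Stable D μ') :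
    μ' = μ := by
  obtain ⟨d, hd1, hd2⟩ := Relation.church_rosser (stepRel_diamond D hD) h1 h3
  have e1 : d = μ := stable_reach_eq D μ d h2 hd1
  have e2 : d = μ' := stable_reach_eq D μ' d h4 hd2
  rw [← e1, ← e2]

/-- Existence and uniqueness of the fixed point: every (finitely supported)
configuration reaches a unique stable configuration `π(σ)`; moreover any
configuration reachable from `σ` reaches the same stable configuration. -/
theorem unique_stable_configuration (D : ℕ) (hD : 2 ≤ D) (σ : Config)
    (hfin : (Function.support σ).Finite) :
    (∃! μ, Reaches D σ μ ∧ Stable D μ) ∧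
    ∀ σ' μ μ', Reaches D σ σ' → Reaches D σ μ → Stable D μ →
      Reaches D σ' μ' → Stable D μ' → μ' = μ := by
  obtain ⟨n, hn⟩ := hfin.bddAbove
  have hb : Bdd σ (n + 1) := by
    intro j hj
    by_contra h
    have : j ∈ Function.support σ := h
    have := hn this
    omega
  obtain ⟨μ, hr, hst⟩ := reach_stable D hD (Meas σ (n + 1)) σ (n + 1) hb rfl
  constructor
  · exact ⟨μ, ⟨hr, hst⟩, fun y ⟨hyr, hys⟩ => unique_aux D hD σ μ y hr hst hyr hys⟩
  · intro σ' ν ν' hσσ' hσν hνst hσ'ν' hν'st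
    exact unique_aux D hD σ ν ν' hσν hνst (hσσ'.trans hσ'ν') hν'st
end
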